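/- arXiv:0804.1391 — 3 statements merged into one kernel-verified Lean document; each statement's English description precedes it below -/
import Mathlib

section
/- Let k be a local field of characteristic 0 and let Q be a bounded subset of M_d(k) containing the identity. Then the limit lim_{n→∞} E_k(Q^n)^{1/n} exists and R_k(Q) = lim_{n→∞} E_k(Q^n)^{1/n} = inf_{n∈ℕ} E_k(Q^n)^{1/n}. -/
/-!
STATEMENT 8.  Let `k` be a local field of characteristic 0 and `Q` a bounded subset of
`M_d(k)` containing the identity.  Then `lim_n E_k(Q^n)^{1/n}` exists and equals both
`R_k(Q)` and `inf_{n ≥ 1} E_k(Q^n)^{1/n}`.  A local field of characteristic 0 is either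
archimedean (`ℝ` or `ℂ`, both covered by the case of subsets of `M_d(ℂ)`, since `ℂ` is
the common algebraic closure and the Hermitian norm on `ℂ^d` restricts to the Euclidean
norm on `ℝ^d`), or non-archimedean (a finite extension of some `ℚ_p`, with `v` the
unique absolute value on its algebraic closure extending the `p`-adic one, supplied as
data with the extension property).  The statement is the conjunction of the two cases.
-/

open Filter
open scoped Pointwise

noncomputable section

/-- The operator norm on `d × d` complex matrices induced by the Hermitian (Euclidean)
norm on `ℂ^d`.  For matrices with entries in `ℝ ⊆ ℂ` this restricts to the operator norm
induced by the Euclidean norm on `ℝ^d`, and `ℂ` is the algebraic closure of both `ℝ` and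
`ℂ`; hence this covers both archimedean local fields. -/
def copNorm (d : ℕ) (A : Matrix (Fin d) (Fin d) ℂ) : ℝ :=
  ‖Matrix.toEuclideanCLM (𝕜 := ℂ) A‖

/-- The norm `‖Q‖` of a set of matrices. -/
def cNorm (d : ℕ) (Q : Set (Matrix (Fin d) (Fin d) ℂ)) : ℝ :=
  sSup (copNorm d '' Q)

/-- `Q` is a bounded set of matrices. -/
def cBounded (d : ℕ) (Q : Set (Matrix (Fin d) (Fin d) ℂ)) : Prop :=
  ∃ C : ℝ, ∀ A ∈ Q, copNorm d A ≤ C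

/-- The minimal norm `E(Q) = inf_{x ∈ GL_d} ‖x Q x⁻¹‖`. -/
def cE (d : ℕ) (Q : Set (Matrix (Fin d) (Fin d) ℂ)) : ℝ :=
  sInf { r | ∃ x : (Matrix (Fin d) (Fin d) ℂ)ˣ,
    r = cNorm d ((fun g => x.val * g * x.inv) '' Q) }

/-- The maximal eigenvalue `Λ(Q) = max {|λ| : λ eigenvalue of some q ∈ Q}`. -/
def cLambda (d : ℕ) (Q : Set (Matrix (Fin d) (Fin d) ℂ)) : ℝ :=
  sSup { r | ∃ A ∈ Q, ∃ μ : ℂ, (Matrix.charpoly A).IsRoot μ ∧ r = ‖μ‖ }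

/-- The spectral radius `R(Q) = lim_n ‖Q^n‖^{1/n}` (the limit exists by
submultiplicativity; `Filter.limUnder` selects it). -/
def cR (d : ℕ) (Q : Set (Matrix (Fin d) (Fin d) ℂ)) : ℝ :=
  limUnder atTop fun n : ℕ => cNorm d (Q ^ n) ^ ((n : ℝ)⁻¹)

/-- The sup norm on `L^d` associated to an absolute value `v` on `L`. -/
def vVec {L : Type*} [Field L] (v : AbsoluteValue L ℝ) (d : ℕ) (x : Fin d → L) : ℝ :=
  sSup (Set.range fun i => v (x i))

/-- The operator norm on `d × d` matrices over `L` induced by the sup norm on `L^d`. -/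
def vOp {L : Type*} [Field L] (v : AbsoluteValue L ℝ) (d : ℕ)
    (A : Matrix (Fin d) (Fin d) L) : ℝ :=
  sInf { c | 0 ≤ c ∧ ∀ x : Fin d → L, vVec v d (A.mulVec x) ≤ c * vVec v d x }

/-- The norm `‖Q‖` of a set of matrices over `L`. -/
def vNorm {L : Type*} [Field L] (v : AbsoluteValue L ℝ) (d : ℕ)
    (Q : Set (Matrix (Fin d) (Fin d) L)) : ℝ :=
  sSup (vOp v d '' Q)

/-- The minimal norm `E(Q) = inf_{x ∈ GL_d} ‖x Q x⁻¹‖`. -/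
def vE {L : Type*} [Field L] (v : AbsoluteValue L ℝ) (d : ℕ)
    (Q : Set (Matrix (Fin d) (Fin d) L)) : ℝ :=
  sInf { r | ∃ x : (Matrix (Fin d) (Fin d) L)ˣ,
    r = vNorm v d ((fun g => x.val * g * x.inv) '' Q) }

/-- The maximal eigenvalue `Λ(Q) = max {v(μ) : μ eigenvalue of some q ∈ Q}`. -/
def vLambda {L : Type*} [Field L] (v : AbsoluteValue L ℝ) (d : ℕ)
    (Q : Set (Matrix (Fin d) (Fin d) L)) : ℝ :=
  sSup { r | ∃ A ∈ Q, ∃ μ : L, (Matrix.charpoly A).IsRoot μ ∧ r = v μ }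

/-- The spectral radius `R(Q) = lim_n ‖Q^n‖^{1/n}`. -/
def vR {L : Type*} [Field L] (v : AbsoluteValue L ℝ) (d : ℕ)
    (Q : Set (Matrix (Fin d) (Fin d) L)) : ℝ :=
  limUnder atTop fun n : ℕ => vNorm v d (Q ^ n) ^ ((n : ℝ)⁻¹)


open Set in

lemma key {M : Type*} [Monoid M] (nrm : M → ℝ) (h1 : nrm 1 = 1)
    (hmul : ∀ a b : M, nrm (a * b) ≤ nrm a * nrm b) (h0 : ∀ a : M, 0 ≤ nrm a)
    (Q : Set M) (hQ : ∃ C : ℝ, ∀ a ∈ Q, nrm a ≤ C) (h1Q : (1 : M) ∈ Q) :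
    Tendsto (fun n : ℕ => sInf { r | ∃ x : Mˣ,
        r = sSup (nrm '' ((fun g => x.val * g * x.inv) '' (Q ^ n))) } ^ ((n : ℝ)⁻¹))
      atTop (nhds (limUnder atTop fun n : ℕ => sSup (nrm '' (Q ^ n)) ^ ((n : ℝ)⁻¹))) ∧
    (limUnder atTop fun n : ℕ => sSup (nrm '' (Q ^ n)) ^ ((n : ℝ)⁻¹)) =
      sInf { x : ℝ | ∃ n : ℕ, 0 < n ∧ x = sInf { r | ∃ u : Mˣ,
        r = sSup (nrm '' ((fun g => u.val * g * u.inv) '' (Q ^ n))) } ^ ((n : ℝ)⁻¹) } := by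
  obtain ⟨C₀, hC₀⟩ := hQ
  set C : ℝ := max C₀ 1 with hCdef
  have hC1 : (1 : ℝ) ≤ C := le_max_right _ _
  have hC : ∀ a ∈ Q, nrm a ≤ C := fun a ha => (hC₀ a ha).trans (le_max_left _ _)
  -- powers are bounded
  have hpow : ∀ n : ℕ, ∀ g ∈ Q ^ n, nrm g ≤ C ^ n := by
    intro n
    induction n with
    | zero => intro g hg; rw [pow_zero] at hg; rw [Set.mem_one] at hg; simp [hg, h1]
    | succ n ih =>
      intro g hg
      rw [pow_succ] at hg
      rcases Set.mem_mul.1 hg with ⟨a, ha, b, hb, rfl⟩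
      calc nrm (a * b) ≤ nrm a * nrm b := hmul a b
        _ ≤ C ^ n * C := mul_le_mul (ih a ha) (hC b hb) (h0 b) (by positivity)
        _ = C ^ (n + 1) := (pow_succ C n).symm
  have hone_mem : ∀ n : ℕ, (1 : M) ∈ Q ^ n := fun n => by
    simpa using Set.pow_mem_pow h1Q (n := n)
  set a : ℕ → ℝ := fun n => sSup (nrm '' (Q ^ n)) with ha_def
  have hne : ∀ n : ℕ, (nrm '' (Q ^ n)).Nonempty := fun n => ⟨nrm 1, 1, hone_mem n, rfl⟩
  have hbdd : ∀ n : ℕ, BddAbove (nrm '' (Q ^ n)) := fun n =>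
    ⟨C ^ n, by rintro r ⟨g, hg, rfl⟩; exact hpow n g hg⟩
  have ha1 : ∀ n : ℕ, 1 ≤ a n := fun n =>
    h1 ▸ le_csSup (hbdd n) ⟨1, hone_mem n, rfl⟩
  have ha0 : ∀ n : ℕ, 0 < a n := fun n => lt_of_lt_of_le one_pos (ha1 n)
  have ha_le : ∀ n : ℕ, ∀ g ∈ Q ^ n, nrm g ≤ a n := fun n g hg =>
    le_csSup (hbdd n) ⟨g, hg, rfl⟩
  have hsub : ∀ m n : ℕ, a (m + n) ≤ a m * a n := by
    intro m n
    apply csSup_le (hne _)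
    rintro r ⟨g, hg, rfl⟩
    rw [pow_add] at hg
    rcases Set.mem_mul.1 hg with ⟨p, hp, q, hq, rfl⟩
    calc nrm (p * q) ≤ nrm p * nrm q := hmul p q
      _ ≤ a m * a n := mul_le_mul (ha_le m p hp) (ha_le n q hq) (h0 q) (ha0 m).le
  -- Fekete
  set u : ℕ → ℝ := fun n => Real.log (a n) with hu_def
  have hu0 : ∀ n, 0 ≤ u n := fun n => Real.log_nonneg (ha1 n)
  have hsubadd : Subadditive u := by
    intro m n
    calc u (m + n) ≤ Real.log (a m * a n) :=
          Real.log_le_log (ha0 _) (hsub m n)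
      _ = u m + u n := Real.log_mul (ha0 m).ne' (ha0 n).ne'
  have hubdd : BddBelow (Set.range fun n : ℕ => u n / n) := by
    refine ⟨0, ?_⟩
    rintro r ⟨n, rfl⟩
    exact div_nonneg (hu0 n) (Nat.cast_nonneg n)
  have htend := hsubadd.tendsto_lim hubdd
  set L : ℝ := Real.exp hsubadd.lim with hL_def
  have hL0 : 0 < L := Real.exp_pos _
  have haL : Tendsto (fun n : ℕ => a n ^ ((n : ℝ)⁻¹)) atTop (nhds L) := by
    have : Tendsto (fun n : ℕ => Real.exp (u n / n)) atTop (nhds L) :=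
      (Real.continuous_exp.tendsto _).comp htend
    refine this.congr' ?_
    filter_upwards [eventually_ge_atTop 1] with n hn
    rw [Real.rpow_def_of_pos (ha0 n), hu_def]
    ring_nf
  have hLle : ∀ n : ℕ, n ≠ 0 → L ≤ a n ^ ((n : ℝ)⁻¹) := by
    intro n hn
    have := hsubadd.lim_le_div hubdd hn
    calc L ≤ Real.exp (u n / n) := Real.exp_le_exp.2 this
      _ = a n ^ ((n : ℝ)⁻¹) := by
        rw [Real.rpow_def_of_pos (ha0 n), hu_def]; ring_nf
  have hLpow : ∀ n : ℕ, n ≠ 0 → L ^ n ≤ a n := by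
    intro n hn
    calc L ^ n ≤ (a n ^ ((n : ℝ)⁻¹)) ^ n :=
          pow_le_pow_left₀ hL0.le (hLle n hn) n
      _ = a n := Real.rpow_inv_natCast_pow (ha0 n).le hn
  -- the minimal norm
  set N : Mˣ → ℕ → ℝ := fun x n =>
    sSup (nrm '' ((fun g => x.val * g * x.inv) '' (Q ^ n))) with hN_def
  set E : ℕ → ℝ := fun n => sInf { r | ∃ x : Mˣ, r = N x n } with hE_def
  have hconj_ne : ∀ (x : Mˣ) (n : ℕ),
      (nrm '' ((fun g => x.val * g * x.inv) '' (Q ^ n))).Nonempty :=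
    fun x n => ⟨nrm (x.val * 1 * x.inv), ⟨x.val * 1 * x.inv, ⟨1, hone_mem n, rfl⟩, rfl⟩⟩
  have hconj_bdd : ∀ (x : Mˣ) (n : ℕ),
      BddAbove (nrm '' ((fun g => x.val * g * x.inv) '' (Q ^ n))) := by
    intro x n
    refine ⟨nrm x.val * C ^ n * nrm x.inv, ?_⟩
    rintro r ⟨_, ⟨g, hg, rfl⟩, rfl⟩
    calc nrm (x.val * g * x.inv) ≤ nrm (x.val * g) * nrm x.inv := hmul _ _
      _ ≤ nrm x.val * nrm g * nrm x.inv :=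
          mul_le_mul_of_nonneg_right (hmul _ _) (h0 _)
      _ ≤ nrm x.val * C ^ n * nrm x.inv :=
          mul_le_mul_of_nonneg_right
            (mul_le_mul_of_nonneg_left (hpow n g hg) (h0 _)) (h0 _)
  have hN1 : ∀ (x : Mˣ) (n : ℕ), 1 ≤ N x n := by
    intro x n
    have h1mem : (1 : ℝ) ∈ nrm '' ((fun g => x.val * g * x.inv) '' (Q ^ n)) := by
      refine ⟨x.val * 1 * x.inv, ⟨1, hone_mem n, rfl⟩, ?_⟩
      rw [mul_one, x.val_inv, h1]
    exact le_csSup (hconj_bdd x n) h1mem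
  have hEset_ne : ∀ n : ℕ, { r | ∃ x : Mˣ, r = N x n }.Nonempty :=
    fun n => ⟨N 1 n, 1, rfl⟩
  have hEset_bdd : ∀ n : ℕ, BddBelow { r | ∃ x : Mˣ, r = N x n } := by
    intro n
    refine ⟨1, ?_⟩
    rintro r ⟨x, rfl⟩
    exact hN1 x n
  have hE1 : ∀ n : ℕ, 1 ≤ E n := fun n => le_csInf (hEset_ne n) (by rintro r ⟨x, rfl⟩; exact hN1 x n)
  have hEle : ∀ n : ℕ, E n ≤ a n := by
    intro n
    have : a n = N 1 n := by
      simp only [hN_def]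
      congr 1
      have : (fun g : M => (1 : Mˣ).val * g * (1 : Mˣ).inv) '' (Q ^ n) = Q ^ n := by
        simp [Units.val_one]
      rw [this]
    exact this ▸ csInf_le (hEset_bdd n) ⟨1, rfl⟩
  -- L^n ≤ E n
  have hLE : ∀ n : ℕ, n ≠ 0 → L ^ n ≤ E n := by
    intro n hn
    apply le_csInf (hEset_ne n)
    rintro r ⟨x, rfl⟩
    -- conjugated products bound
    have hin : ∀ m : ℕ, ∀ g ∈ (Q ^ n) ^ m, nrm (x.val * g * x.inv) ≤ N x n ^ m := by
      intro m
      induction m with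
      | zero =>
        intro g hg
        rw [pow_zero, Set.mem_one] at hg
        subst hg
        rw [mul_one, x.val_inv, h1, pow_zero]
      | succ m ih =>
        intro g hg
        rw [pow_succ] at hg
        rcases Set.mem_mul.1 hg with ⟨p, hp, q, hq, rfl⟩
        have hre : x.val * (p * q) * x.inv = (x.val * p * x.inv) * (x.val * q * x.inv) := by
          have := x.inv_val
          calc x.val * (p * q) * x.inv = x.val * p * (x.inv * x.val) * q * x.inv := by
                rw [this]; noncomm_ring
            _ = (x.val * p * x.inv) * (x.val * q * x.inv) := by noncomm_ring
        rw [hre, pow_succ]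
        have hq' : nrm (x.val * q * x.inv) ≤ N x n :=
          le_csSup (hconj_bdd x n) ⟨x.val * q * x.inv, ⟨q, hq, rfl⟩, rfl⟩
        calc nrm _ ≤ nrm (x.val * p * x.inv) * nrm (x.val * q * x.inv) := hmul _ _
          _ ≤ N x n ^ m * N x n :=
            mul_le_mul (ih p hp) hq' (h0 _)
              (pow_nonneg (le_trans zero_le_one (hN1 x n)) m)
    set Cx : ℝ := nrm x.inv * nrm x.val with hCx_def
    have hCx1 : 1 ≤ Cx := by
      calc (1:ℝ) = nrm 1 := h1.symm
        _ = nrm (x.inv * x.val) := by rw [x.inv_val]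
        _ ≤ Cx := hmul _ _
    have hbound : ∀ m : ℕ, a (n * m) ≤ Cx * N x n ^ m := by
      intro m
      apply csSup_le (hne _)
      rintro r ⟨g, hg, rfl⟩
      rw [pow_mul] at hg
      have hgr : g = x.inv * (x.val * g * x.inv) * x.val := by
        have h1' := x.inv_val
        have h2' := x.val_inv
        calc g = 1 * g * 1 := by rw [one_mul, mul_one]
          _ = (x.inv * x.val) * g * (x.inv * x.val) := by rw [h1']
          _ = x.inv * (x.val * g * x.inv) * x.val := by noncomm_ring
      calc nrm g = nrm (x.inv * (x.val * g * x.inv) * x.val) := by rw [← hgr]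
        _ ≤ nrm (x.inv * (x.val * g * x.inv)) * nrm x.val := hmul _ _
        _ ≤ nrm x.inv * nrm (x.val * g * x.inv) * nrm x.val :=
            mul_le_mul_of_nonneg_right (hmul _ _) (h0 _)
        _ ≤ nrm x.inv * N x n ^ m * nrm x.val :=
            mul_le_mul_of_nonneg_right
              (mul_le_mul_of_nonneg_left (hin m g hg) (h0 _)) (h0 _)
        _ = Cx * N x n ^ m := by ring
    -- conclude L ^ n ≤ N x n
    by_contra hlt
    push_neg at hlt
    have hNpos : 0 < N x n := lt_of_lt_of_le one_pos (hN1 x n)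
    have hgt : 1 < L ^ n / N x n := (one_lt_div hNpos).2 hlt
    obtain ⟨m, hm⟩ := (tendsto_pow_atTop_atTop_of_one_lt hgt).eventually_gt_atTop Cx
      |>.exists_forall_of_atTop
    have hm1 : Cx < (L ^ n / N x n) ^ (max m 1) := hm _ (le_max_left _ _)
    have hcontr : (L ^ n / N x n) ^ (max m 1) ≤ Cx := by
      rw [div_pow, div_le_iff₀ (by positivity)]
      calc (L ^ n) ^ max m 1 = L ^ (n * max m 1) := (pow_mul L n _).symm
        _ ≤ a (n * max m 1) := hLpow _ (by positivity)
        _ ≤ Cx * N x n ^ max m 1 := hbound _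
    exact absurd hm1 (not_lt.2 hcontr)
  -- now conclude
  have hlimUnder : (limUnder atTop fun n : ℕ => a n ^ ((n : ℝ)⁻¹)) = L := haL.limUnder_eq
  have hEtend : Tendsto (fun n : ℕ => E n ^ ((n : ℝ)⁻¹)) atTop (nhds L) := by
    apply tendsto_of_tendsto_of_tendsto_of_le_of_le' tendsto_const_nhds haL
    · filter_upwards [eventually_ge_atTop 1] with n hn
      have hn0 : n ≠ 0 := by omega
      calc L = (L ^ n) ^ ((n : ℝ)⁻¹) := (Real.pow_rpow_inv_natCast hL0.le hn0).symm
        _ ≤ E n ^ ((n : ℝ)⁻¹) :=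
          Real.rpow_le_rpow (by positivity) (hLE n hn0) (by positivity)
    · filter_upwards with n
      exact Real.rpow_le_rpow (le_trans zero_le_one (hE1 n)) (hEle n) (by positivity)
  refine ⟨by rwa [hlimUnder], ?_⟩
  rw [hlimUnder]
  have hSbdd : BddBelow { x : ℝ | ∃ n : ℕ, 0 < n ∧ x = E n ^ ((n : ℝ)⁻¹) } := by
    refine ⟨L, ?_⟩
    rintro r ⟨n, hn, rfl⟩
    calc L = (L ^ n) ^ ((n : ℝ)⁻¹) := (Real.pow_rpow_inv_natCast hL0.le hn.ne').symm
      _ ≤ E n ^ ((n : ℝ)⁻¹) :=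
        Real.rpow_le_rpow (by positivity) (hLE n hn.ne') (by positivity)
    
  apply le_antisymm
  · have hSne : { x : ℝ | ∃ n : ℕ, 0 < n ∧ x = E n ^ ((n : ℝ)⁻¹) }.Nonempty :=
      ⟨E 1 ^ (((1 : ℕ) : ℝ))⁻¹, 1, one_pos, rfl⟩
    apply le_csInf hSne
    rintro r ⟨n, hn, rfl⟩
    calc L = (L ^ n) ^ ((n : ℝ)⁻¹) := (Real.pow_rpow_inv_natCast hL0.le hn.ne').symm
      _ ≤ E n ^ ((n : ℝ)⁻¹) :=
        Real.rpow_le_rpow (by positivity) (hLE n hn.ne') (by positivity)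
  · refine ge_of_tendsto hEtend ?_
    filter_upwards [eventually_ge_atTop 1] with n hn
    exact csInf_le hSbdd ⟨n, by omega, rfl⟩


section CopFacts
lemma copNorm_one' {d : ℕ} (hd : 1 ≤ d) : copNorm d 1 = 1 := by
  haveI : Nonempty (Fin d) := ⟨⟨0, hd⟩⟩
  rw [copNorm, map_one]
  exact norm_one

lemma copNorm_mul' {d : ℕ} (A B : Matrix (Fin d) (Fin d) ℂ) :
    copNorm d (A * B) ≤ copNorm d A * copNorm d B := by
  rw [copNorm, map_mul]
  exact norm_mul_le _ _

lemma copNorm_nonneg' {d : ℕ} (A : Matrix (Fin d) (Fin d) ℂ) : 0 ≤ copNorm d A :=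
  norm_nonneg _
end CopFacts

section VopFacts
variable {L : Type*} [Field L] (v : AbsoluteValue L ℝ) {d : ℕ}

lemma vVec_nonneg (x : Fin d → L) : 0 ≤ vVec v d x :=
  Real.sSup_nonneg (by rintro r ⟨i, rfl⟩; exact v.nonneg _)

lemma le_vVec (x : Fin d → L) (i : Fin d) : v (x i) ≤ vVec v d x :=
  le_csSup (Set.finite_range _).bddAbove ⟨i, rfl⟩

lemma vVec_le (hd : 1 ≤ d) (x : Fin d → L) {c : ℝ} (h : ∀ i, v (x i) ≤ c) : vVec v d x ≤ c := by
  haveI : Nonempty (Fin d) := ⟨⟨0, hd⟩⟩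
  exact csSup_le (Set.range_nonempty _) (by rintro r ⟨i, rfl⟩; exact h i)

lemma vVec_zero (hd : 1 ≤ d) : vVec v d (0 : Fin d → L) = 0 := by
  haveI : Nonempty (Fin d) := ⟨⟨0, hd⟩⟩
  simp [vVec]

lemma vVec_eq_zero {x : Fin d → L} (h : vVec v d x = 0) : x = 0 := by
  funext i
  have := le_vVec v x i
  rw [h] at this
  have := le_antisymm this (v.nonneg _)
  simpa [v.eq_zero] using this

-- the defining set is nonempty
lemma vOp_set_mem (hd : 1 ≤ d) (A : Matrix (Fin d) (Fin d) L) :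
    (∑ i, ∑ j, v (A i j)) ∈
      { c | 0 ≤ c ∧ ∀ x : Fin d → L, vVec v d (A.mulVec x) ≤ c * vVec v d x } := by
  constructor
  · positivity
  · intro x
    apply vVec_le v hd
    intro i
    calc v (A.mulVec x i) = v (∑ j, A i j * x j) := by rfl
      _ ≤ ∑ j, v (A i j * x j) := v.sum_le _ _
      _ = ∑ j, v (A i j) * v (x j) := by simp [v.map_mul]
      _ ≤ ∑ j, v (A i j) * vVec v d x := by
          apply Finset.sum_le_sum
          intro j _
          exact mul_le_mul_of_nonneg_left (le_vVec v x j) (v.nonneg _)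
      _ = (∑ j, v (A i j)) * vVec v d x := by rw [Finset.sum_mul]
      _ ≤ (∑ i, ∑ j, v (A i j)) * vVec v d x := by
          apply mul_le_mul_of_nonneg_right _ (vVec_nonneg v x)
          exact Finset.single_le_sum (f := fun i => ∑ j, v (A i j))
            (fun i _ => by positivity) (Finset.mem_univ i)

lemma vOp_nonneg (hd : 1 ≤ d) (A : Matrix (Fin d) (Fin d) L) : 0 ≤ vOp v d A :=
  le_csInf ⟨_, vOp_set_mem v hd A⟩ fun c hc => hc.1

lemma vOp_spec (hd : 1 ≤ d) (A : Matrix (Fin d) (Fin d) L) (x : Fin d → L) :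
    vVec v d (A.mulVec x) ≤ vOp v d A * vVec v d x := by
  rcases eq_or_lt_of_le (vVec_nonneg v x) with h0 | hpos
  · have hx : x = 0 := vVec_eq_zero v h0.symm
    subst hx
    simp [Matrix.mulVec_zero, ← h0]
  · rw [← div_le_iff₀ hpos]
    apply le_csInf ⟨_, vOp_set_mem v hd A⟩
    rintro c ⟨-, hc⟩
    rw [div_le_iff₀ hpos]
    exact hc x

lemma vOp_mul (hd : 1 ≤ d) (A B : Matrix (Fin d) (Fin d) L) :
    vOp v d (A * B) ≤ vOp v d A * vOp v d B := by
  apply csInf_le ⟨0, fun c hc => hc.1⟩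
  constructor
  · exact mul_nonneg (vOp_nonneg v hd A) (vOp_nonneg v hd B)
  · intro x
    rw [← Matrix.mulVec_mulVec]
    calc vVec v d (A.mulVec (B.mulVec x)) ≤ vOp v d A * vVec v d (B.mulVec x) :=
          vOp_spec v hd A _
      _ ≤ vOp v d A * (vOp v d B * vVec v d x) :=
          mul_le_mul_of_nonneg_left (vOp_spec v hd B x) (vOp_nonneg v hd A)
      _ = vOp v d A * vOp v d B * vVec v d x := by ring

lemma vOp_one (hd : 1 ≤ d) : vOp v d (1 : Matrix (Fin d) (Fin d) L) = 1 := by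
  haveI : Nonempty (Fin d) := ⟨⟨0, hd⟩⟩
  have hones : vVec v d (fun _ => (1 : L)) = 1 := by
    simp [vVec, Set.range_const]
  apply le_antisymm
  · apply csInf_le ⟨0, fun c hc => hc.1⟩
    exact ⟨zero_le_one, fun x => by rw [Matrix.one_mulVec, one_mul]⟩
  · apply le_csInf ⟨_, vOp_set_mem v hd 1⟩
    rintro c ⟨-, hc⟩
    have := hc (fun _ => 1)
    rwa [Matrix.one_mulVec, hones, mul_one] at this

end VopFacts

theorem spectral_radius_eq_lim_min_norms (d : ℕ) (hd : 1 ≤ d) :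
    (∀ Q : Set (Matrix (Fin d) (Fin d) ℂ), cBounded d Q →
      (1 : Matrix (Fin d) (Fin d) ℂ) ∈ Q →
      Tendsto (fun n : ℕ => cE d (Q ^ n) ^ ((n : ℝ)⁻¹)) atTop (nhds (cR d Q)) ∧
        cR d Q = sInf { x : ℝ | ∃ n : ℕ, 0 < n ∧ x = cE d (Q ^ n) ^ ((n : ℝ)⁻¹) }) ∧
    (∀ (p : ℕ) [Fact p.Prime]
      (k : Type) [Field k] [Algebra ℚ_[p] k] [FiniteDimensional ℚ_[p] k]
      (v : AbsoluteValue (AlgebraicClosure k) ℝ),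
      (∀ x : ℚ_[p], v (algebraMap k (AlgebraicClosure k) (algebraMap ℚ_[p] k x)) = ‖x‖) →
      ∀ Q : Set (Matrix (Fin d) (Fin d) k),
        (∃ C : ℝ, ∀ A ∈ Q, vOp v d (A.map ⇑(algebraMap k (AlgebraicClosure k))) ≤ C) →
        (1 : Matrix (Fin d) (Fin d) k) ∈ Q →
        Tendsto
            (fun n : ℕ =>
              vE v d (((fun A => A.map ⇑(algebraMap k (AlgebraicClosure k))) '' Q) ^ n)
                ^ ((n : ℝ)⁻¹))
            atTop
            (nhds (vR v d ((fun A => A.map ⇑(algebraMap k (AlgebraicClosure k))) '' Q))) ∧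
          vR v d ((fun A => A.map ⇑(algebraMap k (AlgebraicClosure k))) '' Q) =
            sInf { x : ℝ | ∃ n : ℕ, 0 < n ∧
              x = vE v d (((fun A => A.map ⇑(algebraMap k (AlgebraicClosure k))) '' Q) ^ n)
                ^ ((n : ℝ)⁻¹) }) := by
  constructor
  · intro Q hQbdd h1Q
    simp only [cE, cNorm, cR]
    exact key (copNorm d) (copNorm_one' hd) (copNorm_mul') (copNorm_nonneg') Q hQbdd h1Q
  · intro p _ k _ _ _ v hv Q hQbdd h1Q
    simp only [vE, vNorm, vR]
    set f := algebraMap k (AlgebraicClosure k)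
    set Q' : Set (Matrix (Fin d) (Fin d) (AlgebraicClosure k)) :=
      (fun A => A.map ⇑f) '' Q with hQ'
    have hbdd' : ∃ C : ℝ, ∀ B ∈ Q', vOp v d B ≤ C := by
      obtain ⟨C, hC⟩ := hQbdd
      exact ⟨C, by rintro B ⟨A, hA, rfl⟩; exact hC A hA⟩
    have h1Q' : (1 : Matrix (Fin d) (Fin d) (AlgebraicClosure k)) ∈ Q' :=
      ⟨1, h1Q, Matrix.map_one _ (map_zero f) (map_one f)⟩
    exact key (vOp v d) (vOp_one v hd) (vOp_mul v hd) (vOp_nonneg v hd) Q' hbdd' h1Q'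
end
end

section
/- Let k be a non-archimedean local field of characteristic 0 and let Q be a bounded subset of M_d(k) containing the identity. Then R_k(Q) = E_k(Q), i.e. the spectral radius of Q equals its minimal norm. -/
/-!
STATEMENT 10.  Let `k` be a non-archimedean local field of characteristic 0 (a finite
extension of some `ℚ_p`, with `v` the unique absolute value on an algebraic closure of
`k` extending the `p`-adic one, supplied as data with the extension property) and `Q` a
bounded subset of `M_d(k)` containing the identity.  Then `R_k(Q) = E_k(Q)`.
-/

open Filter
open scoped Pointwise

noncomputable section

open Topology

lemma absval_nonarch {L : Type*} [Field L] (v : AbsoluteValue L ℝ)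
    (h : ∀ n : ℕ, v (n : L) ≤ 1) (x y : L) : v (x + y) ≤ max (v x) (v y) := by
  letI : NormedField L := v.toNormedField
  have hn : ∀ x : L, ‖x‖ = v x := fun _ => rfl
  have : IsUltrametricDist L :=
    IsUltrametricDist.isUltrametricDist_of_forall_norm_natCast_le_one
      (fun n => (hn _).trans_le (h n))
  simpa only [hn] using IsUltrametricDist.norm_add_le_max x y

namespace ST10
open Topology



lemma ultra_sum_le {ι M : Type*} [AddCommMonoid M] (f : M → ℝ) (h0 : f 0 = 0)
    (hu : ∀ a b, f (a + b) ≤ max (f a) (f b)) (s : Finset ι) (hs : s.Nonempty) (z : ι → M) :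
    f (∑ i ∈ s, z i) ≤ s.sup' hs (fun i => f (z i)) := by
  induction hs using Finset.Nonempty.cons_induction with
  | singleton i => simp
  | cons i s his hs ih =>
      rw [Finset.sum_cons, Finset.sup'_cons hs]
      exact (hu _ _).trans (max_le_max le_rfl ih)

variable {L : Type*} [Field L] (v : AbsoluteValue L ℝ) {d : ℕ}

section
variable (hd : 1 ≤ d)
include hd

lemma finNonempty : Nonempty (Fin d) := ⟨⟨0, hd⟩⟩

lemma vVec_eq_sup' (x : Fin d → L) :
    vVec v d x = Finset.univ.sup' (Finset.univ_nonempty_iff.mpr (finNonempty hd))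
      (fun i => v (x i)) := by
  rw [vVec, show (Set.range fun i => v (x i))
      = (fun i => v (x i)) '' ↑(Finset.univ : Finset (Fin d)) by
    rw [Finset.coe_univ, Set.image_univ]]
  exact (Finset.sup'_eq_csSup_image Finset.univ
    (Finset.univ_nonempty_iff.mpr (finNonempty hd)) (fun i => v (x i))).symm


lemma coord_le_vVec (x : Fin d → L) (i : Fin d) : v (x i) ≤ vVec v d x := by
  rw [vVec_eq_sup' v hd]
  exact Finset.le_sup' (fun j => v (x j)) (Finset.mem_univ i)

lemma vVec_le (x : Fin d → L) {c : ℝ} (h : ∀ i, v (x i) ≤ c) : vVec v d x ≤ c := by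
  rw [vVec_eq_sup' v hd]; exact Finset.sup'_le _ _ fun i _ => h i

lemma vVec_nonneg (x : Fin d → L) : 0 ≤ vVec v d x := by
  have := finNonempty hd
  exact (v.nonneg _).trans (coord_le_vVec v hd x (Classical.arbitrary _))

lemma vVec_zero : vVec v d (0 : Fin d → L) = 0 := by
  refine le_antisymm (vVec_le v hd _ fun i => by simp) (vVec_nonneg v hd _)

lemma vVec_pos {x : Fin d → L} (hx : x ≠ 0) : 0 < vVec v d x := by
  obtain ⟨i, hi⟩ := Function.ne_iff.mp hx
  exact lt_of_lt_of_le (v.pos hi) (coord_le_vVec v hd x i)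

lemma vVec_smul (c : L) (x : Fin d → L) : vVec v d (c • x) = v c * vVec v d x := by
  rcases eq_or_ne c 0 with rfl | hc
  · simp [vVec_zero v hd, map_zero]
  have key : ∀ (a : L) (y : Fin d → L), vVec v d (a • y) ≤ v a * vVec v d y := by
    intro a y
    refine vVec_le v hd _ fun i => ?_
    rw [Pi.smul_apply, smul_eq_mul, map_mul]
    exact mul_le_mul_of_nonneg_left (coord_le_vVec v hd y i) (v.nonneg a)
  refine le_antisymm (key c x) ?_
  have h2 := key c⁻¹ (c • x)
  rw [inv_smul_smul₀ hc, map_inv₀] at h2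
  have hvc : 0 < v c := v.pos hc
  calc v c * vVec v d x ≤ v c * ((v c)⁻¹ * vVec v d (c • x)) :=
        mul_le_mul_of_nonneg_left h2 (v.nonneg c)
    _ = vVec v d (c • x) := by field_simp

end

variable (hna : ∀ x y : L, v (x + y) ≤ max (v x) (v y))

section
include hna

lemma vVec_add_le (hd : 1 ≤ d) (x y : Fin d → L) :
    vVec v d (x + y) ≤ max (vVec v d x) (vVec v d y) := by
  refine vVec_le v hd _ fun i => (hna _ _).trans ?_
  exact max_le_max (coord_le_vVec v hd x i) (coord_le_vVec v hd y i)

end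

/-- the entrywise max norm -/
def em (hd : 1 ≤ d) (A : Matrix (Fin d) (Fin d) L) : ℝ :=
  Finset.univ.sup' (Finset.univ_nonempty_iff.mpr
    ⟨(⟨0, hd⟩, ⟨0, hd⟩)⟩)
    (fun ij : Fin d × Fin d => v (A ij.1 ij.2))

variable (hd : 1 ≤ d)

lemma entry_le_em (A : Matrix (Fin d) (Fin d) L) (i j : Fin d) : v (A i j) ≤ em v hd A :=
  Finset.le_sup' (fun ij : Fin d × Fin d => v (A ij.1 ij.2)) (Finset.mem_univ (i, j))

lemma em_le (A : Matrix (Fin d) (Fin d) L) {c : ℝ} (h : ∀ i j, v (A i j) ≤ c) :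
    em v hd A ≤ c :=
  Finset.sup'_le _ _ fun ij _ => h ij.1 ij.2

lemma em_nonneg (A : Matrix (Fin d) (Fin d) L) : 0 ≤ em v hd A :=
  (v.nonneg _).trans (entry_le_em v hd A ⟨0, hd⟩ ⟨0, hd⟩)

lemma em_one : em v hd (1 : Matrix (Fin d) (Fin d) L) = 1 := by
  refine le_antisymm (em_le v hd _ fun i j => ?_) ?_
  · rw [Matrix.one_apply]
    split <;> simp
  · have := entry_le_em v hd (1 : Matrix (Fin d) (Fin d) L) ⟨0, hd⟩ ⟨0, hd⟩
    rwa [Matrix.one_apply_eq, map_one] at this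

include hna

lemma mulVec_le (A : Matrix (Fin d) (Fin d) L) (x : Fin d → L) :
    vVec v d (A.mulVec x) ≤ em v hd A * vVec v d x := by
  have hne : (Finset.univ : Finset (Fin d)).Nonempty :=
    Finset.univ_nonempty_iff.mpr (finNonempty hd)
  refine vVec_le v hd _ fun i => ?_
  have : A.mulVec x i = ∑ j, A i j * x j := by
    simp [Matrix.mulVec, dotProduct]
  rw [this]
  refine (ultra_sum_le v (map_zero v) hna Finset.univ hne _).trans ?_
  refine Finset.sup'_le _ _ fun j _ => ?_
  rw [map_mul]
  exact mul_le_mul (entry_le_em v hd A i j) (coord_le_vVec v hd x j) (v.nonneg _)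
    (em_nonneg v hd A)

lemma vOp_eq_em (A : Matrix (Fin d) (Fin d) L) : vOp v d A = em v hd A := by
  refine IsLeast.csInf_eq ⟨⟨em_nonneg v hd A, mulVec_le v hna hd A⟩, ?_⟩
  rintro c ⟨hc0, hc⟩
  refine em_le v hd A fun i j => ?_
  have h1 := hc (Pi.single j 1)
  have hA : A.mulVec (Pi.single j 1) = fun i => A i j := by
    ext i
    simp [Matrix.mulVec_single]
  have hv1 : vVec v d (Pi.single j 1) = 1 := by
    refine le_antisymm (vVec_le v hd _ fun i => ?_) ?_
    · rcases eq_or_ne i j with rfl | hij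
      · simp
      · simp [Pi.single_apply, hij]
    · have := coord_le_vVec v hd (Pi.single j (1:L)) j
      simpa using this
  rw [hA, hv1, mul_one] at h1
  exact (coord_le_vVec v hd (fun i => A i j) i).trans h1

lemma em_mul_le (A B : Matrix (Fin d) (Fin d) L) :
    em v hd (A * B) ≤ em v hd A * em v hd B := by
  have hne : (Finset.univ : Finset (Fin d)).Nonempty :=
    Finset.univ_nonempty_iff.mpr (finNonempty hd)
  refine em_le v hd _ fun i j => ?_
  rw [Matrix.mul_apply]
  refine (ultra_sum_le v (map_zero v) hna Finset.univ hne _).trans ?_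
  refine Finset.sup'_le _ _ fun k _ => ?_
  rw [map_mul]
  exact mul_le_mul (entry_le_em v hd A i k) (entry_le_em v hd B k j) (v.nonneg _)
    (em_nonneg v hd A)

omit hna

lemma em_pos_of_ne_zero {A : Matrix (Fin d) (Fin d) L} (hA : A ≠ 0) : 0 < em v hd A := by
  have : ∃ i j, A i j ≠ 0 := by
    by_contra h
    push_neg at h
    exact hA (by ext i j; simp [h])
  obtain ⟨i, j, hij⟩ := this
  exact lt_of_lt_of_le (v.pos hij) (entry_le_em v hd A i j)

lemma one_ne_zero_matrix (hd' : 1 ≤ d) : (1 : Matrix (Fin d) (Fin d) L) ≠ 0 := by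
  intro h
  have h2 := congrFun (congrFun h ⟨0, hd'⟩) (⟨0, hd'⟩ : Fin d)
  rw [Matrix.one_apply_eq] at h2
  exact one_ne_zero h2

lemma em_pos_of_unit (x : (Matrix (Fin d) (Fin d) L)ˣ) : 0 < em v hd x.val := by
  refine em_pos_of_ne_zero v hd fun h => ?_
  have h2 := x.val_inv
  rw [h, zero_mul] at h2
  exact one_ne_zero_matrix (L := L) hd h2.symm

-- ### Part 2: the sequence and Fekete
section Sets
variable (P : Set (Matrix (Fin d) (Fin d) L))

/-- the sequence `n ↦ sSup (em '' P^n)` -/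
def aseq (n : ℕ) : ℝ := sSup (em v hd '' (P ^ n))

variable {P}
variable (hP1 : (1 : Matrix (Fin d) (Fin d) L) ∈ P) {C : ℝ}
  (hC : ∀ g ∈ P, em v hd g ≤ C)

include hP1 in
lemma one_mem_pow (n : ℕ) : (1 : Matrix (Fin d) (Fin d) L) ∈ P ^ n := by
  induction n with
  | zero => simp [Set.mem_one]
  | succ n ih =>
      rw [pow_succ]
      simpa using Set.mul_mem_mul ih hP1

include hna hC in
lemma em_le_pow {n : ℕ} {g : Matrix (Fin d) (Fin d) L} (hg : g ∈ P ^ n) :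
    em v hd g ≤ max C 1 ^ n := by
  induction n generalizing g with
  | zero =>
      rw [pow_zero, Set.mem_one] at hg
      subst hg
      simp [em_one v hd]
  | succ n ih =>
      rw [pow_succ] at hg
      obtain ⟨h, hh, q, hq, rfl⟩ := Set.mem_mul.mp hg
      calc em v hd (h * q) ≤ em v hd h * em v hd q := em_mul_le v hna hd h q
        _ ≤ max C 1 ^ n * max C 1 := by
            refine mul_le_mul (ih hh) ((hC q hq).trans (le_max_left _ _)) (em_nonneg v hd q) ?_
            positivity
        _ = max C 1 ^ (n + 1) := by rw [pow_succ]

include hna hC in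
lemma aseq_bddAbove (n : ℕ) : BddAbove (em v hd '' (P ^ n)) := by
  refine ⟨max C 1 ^ n, ?_⟩
  rintro r ⟨g, hg, rfl⟩
  exact em_le_pow v hna hd hC hg

include hna hP1 hC in
lemma one_le_aseq (n : ℕ) : 1 ≤ aseq v hd P n :=
  le_csSup (aseq_bddAbove v hna hd hC n) ⟨1, one_mem_pow hP1 n, em_one v hd⟩

include hna hP1 hC in
lemma aseq_pos (n : ℕ) : 0 < aseq v hd P n :=
  lt_of_lt_of_le one_pos (one_le_aseq v hna hd hP1 hC n)

include hna hC in
lemma em_le_aseq {n : ℕ} {g : Matrix (Fin d) (Fin d) L} (hg : g ∈ P ^ n) :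
    em v hd g ≤ aseq v hd P n :=
  le_csSup (aseq_bddAbove v hna hd hC n) ⟨g, hg, rfl⟩

include hna hP1 hC in
lemma aseq_submul (m n : ℕ) :
    aseq v hd P (m + n) ≤ aseq v hd P m * aseq v hd P n := by
  have hm := aseq_pos v hna hd hP1 hC m
  have hn := aseq_pos v hna hd hP1 hC n
  refine Real.sSup_le ?_ (by positivity)
  rintro r ⟨g, hg, rfl⟩
  rw [pow_add] at hg
  obtain ⟨h, hh, q, hq, rfl⟩ := Set.mem_mul.mp hg
  calc em v hd (h * q) ≤ em v hd h * em v hd q := em_mul_le v hna hd h q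
    _ ≤ aseq v hd P m * aseq v hd P n :=
        mul_le_mul (em_le_aseq v hna hd hC hh) (em_le_aseq v hna hd hC hq)
          (em_nonneg v hd q) hm.le

include hna in
lemma vNorm_eq_sSup_em (T : Set (Matrix (Fin d) (Fin d) L)) :
    vNorm v d T = sSup (em v hd '' T) := by
  unfold vNorm
  congr 1
  exact Set.image_congr fun g _ => vOp_eq_em v hna hd g

include hna hP1 hC in
lemma subadditive_log : Subadditive (fun n => Real.log (aseq v hd P n)) := by
  intro m n
  rw [← Real.log_mul (aseq_pos v hna hd hP1 hC m).ne' (aseq_pos v hna hd hP1 hC n).ne']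
  exact Real.log_le_log (aseq_pos v hna hd hP1 hC (m + n)) (aseq_submul v hna hd hP1 hC m n)

include hna hP1 hC in
lemma log_div_nonneg (n : ℕ) : 0 ≤ Real.log (aseq v hd P n) / n := by
  apply div_nonneg _ (Nat.cast_nonneg n)
  exact Real.log_nonneg (one_le_aseq v hna hd hP1 hC n)

/-- the spectral radius as `exp` of the subadditive limit -/
def rho : ℝ := Real.exp (subadditive_log v hna hd hP1 hC).lim

include hna hP1 hC in
lemma one_le_rho : 1 ≤ rho v hna hd hP1 hC := by
  rw [rho, ← Real.exp_zero, Real.exp_le_exp, Subadditive.lim]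
  refine le_csInf ⟨Real.log (aseq v hd P 1) / 1, ⟨1, by simp, by norm_num⟩⟩ ?_
  rintro r ⟨n, -, rfl⟩
  exact log_div_nonneg v hna hd hP1 hC n

include hna hP1 hC in
lemma rho_pos : 0 < rho v hna hd hP1 hC :=
  lt_of_lt_of_le one_pos (one_le_rho v hna hd hP1 hC)

include hna hP1 hC in
lemma tendsto_aseq_rpow :
    Tendsto (fun n : ℕ => aseq v hd P n ^ ((n : ℝ)⁻¹)) atTop
      (𝓝 (rho v hna hd hP1 hC)) := by
  have hb : BddBelow (Set.range fun n : ℕ => Real.log (aseq v hd P n) / n) := by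
    refine ⟨0, ?_⟩
    rintro r ⟨n, rfl⟩
    exact log_div_nonneg v hna hd hP1 hC n
  have h1 := (subadditive_log v hna hd hP1 hC).tendsto_lim hb
  have h2 : Tendsto (fun n : ℕ => Real.exp (Real.log (aseq v hd P n) / n)) atTop
      (𝓝 (rho v hna hd hP1 hC)) := Real.continuous_exp.continuousAt.tendsto.comp h1
  refine h2.congr' ?_
  filter_upwards [eventually_ge_atTop 1] with n hn
  have hpos := aseq_pos v hna hd hP1 hC n
  rw [div_eq_mul_inv, mul_comm, ← Real.log_rpow hpos,
    Real.exp_log (Real.rpow_pos_of_pos hpos _)]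

end Sets
-- ### Part 3: easy direction
section Easy
variable {P : Set (Matrix (Fin d) (Fin d) L)}
variable (hP1 : (1 : Matrix (Fin d) (Fin d) L) ∈ P) {C : ℝ}
  (hC : ∀ g ∈ P, em v hd g ≤ C)
variable (x : (Matrix (Fin d) (Fin d) L)ˣ)

/-- the conjugated set -/
def cset (P : Set (Matrix (Fin d) (Fin d) L)) : Set (Matrix (Fin d) (Fin d) L) :=
  (fun g => x.val * g * x.inv) '' P

/-- norm of the conjugated set -/
def bconj (P : Set (Matrix (Fin d) (Fin d) L)) : ℝ := sSup (em v hd '' cset x P)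

include hna hC in
lemma cset_bddAbove : BddAbove (em v hd '' cset x P) := by
  refine ⟨em v hd x.val * max C 0 * em v hd x.inv, ?_⟩
  rintro r ⟨-, ⟨g, hg, rfl⟩, rfl⟩
  calc em v hd (x.val * g * x.inv)
      ≤ em v hd (x.val * g) * em v hd x.inv := em_mul_le v hna hd _ _
    _ ≤ em v hd x.val * max C 0 * em v hd x.inv := by
        refine mul_le_mul_of_nonneg_right ?_ (em_nonneg v hd _)
        exact (em_mul_le v hna hd _ _).trans
          (mul_le_mul_of_nonneg_left ((hC g hg).trans (le_max_left _ _)) (em_nonneg v hd _))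

include hna hP1 hC in
lemma one_le_bconj : 1 ≤ bconj v hd x P := by
  refine le_csSup (cset_bddAbove v hna hd hC x) ?_
  refine ⟨x.val * 1 * x.inv, ⟨1, hP1, rfl⟩, ?_⟩
  rw [mul_one, x.val_inv, em_one v hd]

include hna hC in
lemma em_conj_le (g : Matrix (Fin d) (Fin d) L) (hg : g ∈ P) :
    em v hd (x.val * g * x.inv) ≤ bconj v hd x P :=
  le_csSup (cset_bddAbove v hna hd hC x) ⟨x.val * g * x.inv, ⟨g, hg, rfl⟩, rfl⟩

include hna hP1 hC in
lemma em_conj_pow_le {n : ℕ} {g : Matrix (Fin d) (Fin d) L} (hg : g ∈ P ^ n) :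
    em v hd (x.val * g * x.inv) ≤ bconj v hd x P ^ n := by
  induction n generalizing g with
  | zero =>
      rw [pow_zero, Set.mem_one] at hg
      subst hg
      rw [mul_one, x.val_inv, em_one v hd, pow_zero]
  | succ n ih =>
      rw [pow_succ] at hg
      obtain ⟨h, hh, q, hq, rfl⟩ := Set.mem_mul.mp hg
      have hsplit : x.val * (h * q) * x.inv = (x.val * h * x.inv) * (x.val * q * x.inv) := by
        have e1 : x.inv * (x.val * q * x.inv) = q * x.inv := by
          rw [mul_assoc x.val q x.inv, ← mul_assoc x.inv x.val (q * x.inv), x.inv_val, one_mul]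
        calc x.val * (h * q) * x.inv = x.val * h * (q * x.inv) := by
              rw [mul_assoc x.val (h * q) x.inv, mul_assoc h q x.inv,
                ← mul_assoc x.val h (q * x.inv)]
          _ = (x.val * h * x.inv) * (x.val * q * x.inv) := by
              rw [mul_assoc (x.val * h) x.inv (x.val * q * x.inv), e1]
      rw [hsplit, pow_succ]
      exact (em_mul_le v hna hd _ _).trans
        (mul_le_mul (ih hh) (em_conj_le v hna hd hC x q hq) (em_nonneg v hd _)
          (pow_nonneg (zero_le_one.trans (one_le_bconj v hna hd hP1 hC x)) n))

include hna hP1 hC in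
lemma aseq_le_conj (n : ℕ) :
    aseq v hd P n ≤ em v hd x.inv * em v hd x.val * bconj v hd x P ^ n := by
  refine Real.sSup_le ?_ ?_
  · rintro r ⟨g, hg, rfl⟩
    have hg' : g = x.inv * (x.val * g * x.inv) * x.val := by
      rw [mul_assoc x.val g x.inv, ← mul_assoc x.inv x.val (g * x.inv), x.inv_val, one_mul,
        mul_assoc g x.inv x.val, x.inv_val, mul_one]
    calc em v hd g = em v hd (x.inv * (x.val * g * x.inv) * x.val) := by rw [← hg']
      _ ≤ em v hd (x.inv * (x.val * g * x.inv)) * em v hd x.val := em_mul_le v hna hd _ _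
      _ ≤ em v hd x.inv * bconj v hd x P ^ n * em v hd x.val := by
          refine mul_le_mul_of_nonneg_right ?_ (em_nonneg v hd _)
          exact (em_mul_le v hna hd _ _).trans
            (mul_le_mul_of_nonneg_left (em_conj_pow_le v hna hd hP1 hC x hg)
              (em_nonneg v hd _))
      _ = em v hd x.inv * em v hd x.val * bconj v hd x P ^ n := by ring
  · have h1 : 0 < em v hd x.inv := em_pos_of_unit v hd x⁻¹
    have h2 : 0 < em v hd x.val := em_pos_of_unit v hd x
    have h3 : (0:ℝ) < 1 := one_pos
    have h4 := one_le_bconj v hna hd hP1 hC x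
    positivity

include hna hP1 hC in
lemma rho_le_bconj : rho v hna hd hP1 hC ≤ bconj v hd x P := by
  have h1 : 0 < em v hd x.inv := em_pos_of_unit v hd x⁻¹
  have h2 : 0 < em v hd x.val := em_pos_of_unit v hd x
  set K := em v hd x.inv * em v hd x.val with hK
  have hKpos : 0 < K := by positivity
  set b := bconj v hd x P with hb
  have hb1 : 1 ≤ b := one_le_bconj v hna hd hP1 hC x
  have hbpos : 0 < b := lt_of_lt_of_le one_pos hb1
  -- log (aseq n) / n ≤ log K / n + log b
  have key : ∀ n : ℕ, Real.log (aseq v hd P n) / n ≤ Real.log K * (n:ℝ)⁻¹ + Real.log b := by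
    intro n
    rcases Nat.eq_zero_or_pos n with rfl | hn
    · simp only [Nat.cast_zero, div_zero, inv_zero, mul_zero, zero_add]
      exact Real.log_nonneg hb1
    have hnR : (0:ℝ) < n := by exact_mod_cast hn
    have h5 : aseq v hd P n ≤ K * b ^ n := aseq_le_conj v hna hd hP1 hC x n
    have h6 : Real.log (aseq v hd P n) ≤ Real.log K + n * Real.log b := by
      calc Real.log (aseq v hd P n) ≤ Real.log (K * b ^ n) :=
            Real.log_le_log (aseq_pos v hna hd hP1 hC n) h5
        _ = Real.log K + n * Real.log b := by
            rw [Real.log_mul hKpos.ne' (by positivity), Real.log_pow]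
    rw [div_le_iff₀ hnR]
    calc Real.log (aseq v hd P n) ≤ Real.log K + n * Real.log b := h6
      _ = (Real.log K * (n:ℝ)⁻¹ + Real.log b) * n := by
          field_simp
  -- pass to the limit
  have hlim1 : Tendsto (fun n : ℕ => Real.log (aseq v hd P n) / n) atTop
      (𝓝 (subadditive_log v hna hd hP1 hC).lim) := by
    refine (subadditive_log v hna hd hP1 hC).tendsto_lim ⟨0, ?_⟩
    rintro r ⟨n, rfl⟩
    exact log_div_nonneg v hna hd hP1 hC n
  have hlim2 : Tendsto (fun n : ℕ => Real.log K * (n:ℝ)⁻¹ + Real.log b) atTop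
      (𝓝 (Real.log b)) := by
    have : Tendsto (fun n : ℕ => (n:ℝ)⁻¹) atTop (𝓝 0) :=
      tendsto_inv_atTop_nhds_zero_nat
    have := (this.const_mul (Real.log K)).add_const (Real.log b)
    simpa using this
  have hle : (subadditive_log v hna hd hP1 hC).lim ≤ Real.log b :=
    le_of_tendsto_of_tendsto' hlim1 hlim2 key
  calc rho v hna hd hP1 hC = Real.exp (subadditive_log v hna hd hP1 hC).lim := rfl
    _ ≤ Real.exp (Real.log b) := Real.exp_le_exp.mpr hle
    _ = b := Real.exp_log hbpos

include hna hP1 hC in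
lemma rho_le_vE : rho v hna hd hP1 hC ≤ vE v d P := by
  refine le_csInf ⟨vNorm v d (cset 1 P), 1, rfl⟩ ?_
  rintro r ⟨x, rfl⟩
  rw [show ((fun g => x.val * g * x.inv) '' P) = cset x P from rfl,
    vNorm_eq_sSup_em v hna hd]
  exact rho_le_bconj v hna hd hP1 hC x

end Easy
-- ### Part 4a: dense values in an algebraically closed field
section Dense

lemma exists_v_btwn [IsAlgClosed L] {π : L} (hπ0 : 0 < v π) (hπ1 : v π < 1)
    {r s : ℝ} (hr : 0 < r) (hrs : r < s) : ∃ a : L, a ≠ 0 ∧ r < v a ∧ v a < s := by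
  set c := v π with hc
  have hc0 : 0 < c := hπ0
  have hc1 : c < 1 := hπ1
  have hcne1 : c ≠ 1 := ne_of_lt hc1
  have hs : 0 < s := hr.trans hrs
  have hlb : Real.logb c s < Real.logb c r :=
    Real.logb_lt_logb_of_base_lt_one hc0 hc1 hr hrs
  obtain ⟨q, hq1, hq2⟩ := exists_rat_btwn hlb
  have hπne : π ≠ 0 := v.ne_zero_iff.mp hπ0.ne'
  obtain ⟨z, hz⟩ := IsAlgClosed.exists_pow_nat_eq (π ^ (q.num)) (n := q.den) q.den_pos
  have hzne : z ≠ 0 := by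
    intro h
    rw [h, zero_pow q.den_ne_zero] at hz
    exact zpow_ne_zero q.num hπne hz.symm
  have hvz : 0 < v z := v.pos hzne
  -- compute `v z = c ^ (q : ℝ)`
  have hvzpow : (v z) ^ (q.den : ℕ) = c ^ (q.num : ℤ) := by
    rw [← v.map_pow, hz, map_zpow₀]
  have hden0 : ((q.den : ℝ)) ≠ 0 := by exact_mod_cast q.den_ne_zero
  have hkey : v z = c ^ (q : ℝ) := by
    have h1 : (v z) ^ ((q.den : ℕ) : ℝ) = c ^ ((q.num : ℤ) : ℝ) := by
      rw [Real.rpow_natCast, Real.rpow_intCast, hvzpow]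
    have h2 : v z = ((v z) ^ ((q.den : ℕ) : ℝ)) ^ (((q.den : ℕ) : ℝ))⁻¹ := by
      rw [← Real.rpow_mul hvz.le, mul_inv_cancel₀ hden0, Real.rpow_one]
    rw [h2, h1, ← Real.rpow_mul hc0.le]
    congr 1
    rw [Rat.cast_def]
    field_simp
  refine ⟨z, hzne, ?_, ?_⟩
  · have : c ^ (Real.logb c r) = r := Real.rpow_logb hc0 hcne1 hr
    rw [hkey, ← this]
    exact (Real.rpow_lt_rpow_left_iff_of_base_lt_one hc0 hc1).mpr hq2
  · have : c ^ (Real.logb c s) = s := Real.rpow_logb hc0 hcne1 hs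
    rw [hkey, ← this]
    exact (Real.rpow_lt_rpow_left_iff_of_base_lt_one hc0 hc1).mpr hq1

end Dense
-- ### Part 4b: almost-orthogonal bases for ultrametric norms
section Diag

variable {NN : (Fin d → L) → ℝ}
variable (h1 : ∀ u, vVec v d u ≤ NN u)
variable (hadd : ∀ u w, NN (u + w) ≤ max (NN u) (NN w))
variable (hsmul : ∀ (c : L) (u), NN (c • u) = v c * NN u)

include hd h1 in
lemma NN_nonneg (u : Fin d → L) : 0 ≤ NN u := (vVec_nonneg v hd u).trans (h1 u)

include hd h1 in
lemma NN_pos {u : Fin d → L} (hu : u ≠ 0) : 0 < NN u :=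
  lt_of_lt_of_le (vVec_pos v hd hu) (h1 u)

include hsmul in
lemma NN_zero : NN 0 = 0 := by
  have := hsmul 0 0
  rwa [zero_smul, map_zero, zero_mul] at this

include hd hna h1 hadd hsmul in
lemma exists_good_family {t : ℝ} (ht : 1 < t) :
    ∀ m : ℕ, m ≤ d → ∃ e : Fin m → (Fin d → L),
      LinearIndependent L e ∧
      ∀ c : Fin m → L, ∀ i, v (c i) * NN (e i) ≤ t ^ m * NN (∑ j, c j • e j) := by
  intro m
  induction m with
  | zero =>
      exact fun _ => ⟨fun i => i.elim0, linearIndependent_empty_type, fun c i => i.elim0⟩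
  | succ m ih =>
      intro hm1
      obtain ⟨e, he, hprop⟩ := ih (Nat.le_of_succ_le hm1)
      set W := Submodule.span L (Set.range e) with hWdef
      have hWne : W ≠ ⊤ := by
        intro hW
        have hB : Module.Basis (Fin m) L (Fin d → L) := Module.Basis.mk he (hW ▸ le_rfl)
        have hcard := Module.finrank_eq_card_basis hB
        rw [Module.finrank_pi, Fintype.card_fin, Fintype.card_fin] at hcard
        omega
      obtain ⟨u, hu⟩ : ∃ u, u ∉ W := by
        by_contra h
        push_neg at h
        exact hWne (Submodule.eq_top_iff'.mpr h)
      have huz : u ≠ 0 := fun h => hu (h ▸ W.zero_mem)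
      -- a linear functional vanishing on `W` with `f u = 1`
      have hWu : W.mkQ u ≠ 0 := by
        rw [Submodule.mkQ_apply, ne_eq, Submodule.Quotient.mk_eq_zero]
        exact hu
      obtain ⟨φ, hφ⟩ : ∃ φ : Module.Dual L ((Fin d → L) ⧸ W), φ (W.mkQ u) ≠ 0 := by
        by_contra h
        push_neg at h
        exact hWu ((Module.forall_dual_apply_eq_zero_iff L _).mp h)
      set f : (Fin d → L) →ₗ[L] L := (φ (W.mkQ u))⁻¹ • (φ.comp W.mkQ) with hf
      have hfu : f u = 1 := by
        rw [hf]
        simp only [LinearMap.smul_apply, LinearMap.comp_apply, smul_eq_mul]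
        exact inv_mul_cancel₀ hφ
      have hfW : ∀ w ∈ W, f w = 0 := by
        intro w hw
        rw [hf]
        simp only [LinearMap.smul_apply, LinearMap.comp_apply, smul_eq_mul]
        have : W.mkQ w = 0 := by
          rw [Submodule.mkQ_apply, Submodule.Quotient.mk_eq_zero]
          exact hw
        rw [this, map_zero, mul_zero]
      -- the functional is bounded
      have hne : (Finset.univ : Finset (Fin d)).Nonempty :=
        Finset.univ_nonempty_iff.mpr (finNonempty hd)
      set F : ℝ := Finset.univ.sup' hne (fun i => v (f (fun j => if i = j then 1 else 0)))
        with hFdef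
      have hbound : ∀ y, v (f y) ≤ F * vVec v d y := by
        intro y
        rw [LinearMap.pi_apply_eq_sum_univ f y]
        refine (ultra_sum_le v (map_zero v) hna Finset.univ hne _).trans ?_
        refine Finset.sup'_le _ _ fun i _ => ?_
        rw [smul_eq_mul, map_mul, mul_comm]
        refine mul_le_mul (Finset.le_sup' (fun i => v (f (fun j => if i = j then 1 else 0)))
          (Finset.mem_univ i)) (coord_le_vVec v hd y i) (v.nonneg _) ?_
        exact le_trans (v.nonneg _) (Finset.le_sup'
          (fun i => v (f (fun j => if i = j then 1 else 0))) (Finset.mem_univ i))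
      have hF0 : 0 < F := by
        by_contra h
        push_neg at h
        have h2 := hbound u
        rw [hfu, map_one] at h2
        have : F * vVec v d u ≤ 0 :=
          mul_nonpos_of_nonpos_of_nonneg h (vVec_nonneg v hd u)
        linarith
      -- the distance from `u` to `W` is positive
      set D : Set ℝ := (fun w => NN (u - w)) '' (W : Set (Fin d → L)) with hD
      have hDne : D.Nonempty := ⟨NN (u - 0), 0, W.zero_mem, rfl⟩
      have hDlb : ∀ r ∈ D, F⁻¹ ≤ r := by
        rintro r ⟨w, hw, rfl⟩
        have hfuw : f (u - w) = 1 := by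
          rw [map_sub, hfu, hfW w hw, sub_zero]
        have h3 : (1 : ℝ) ≤ F * NN (u - w) := by
          have h4 := hbound (u - w)
          rw [hfuw, map_one] at h4
          exact h4.trans (mul_le_mul_of_nonneg_left (h1 _) hF0.le)
        rw [inv_eq_one_div, div_le_iff₀ hF0, mul_comm]
        exact h3.trans_eq rfl
      set δ : ℝ := sInf D with hδ
      have hδpos : 0 < δ := lt_of_lt_of_le (inv_pos.mpr hF0) (le_csInf hDne hDlb)
      have hδle : ∀ w ∈ W, δ ≤ NN (u - w) := fun w hw =>
        csInf_le ⟨F⁻¹, fun r hr => hDlb r hr⟩ ⟨w, hw, rfl⟩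
      obtain ⟨r0, hr0mem, hr0⟩ := exists_lt_of_csInf_lt hDne
        (show sInf D < t * δ from (lt_mul_iff_one_lt_left hδpos).mpr ht)
      obtain ⟨w₀, hw₀, rfl⟩ := hr0mem
      set e' : Fin d → L := u - w₀ with he'
      have he'W : e' ∉ W := by
        intro h
        have := W.add_mem h hw₀
        rw [he', sub_add_cancel] at this
        exact hu this
      have he'δ : NN e' < t * δ := hr0
      have hlow : ∀ w ∈ W, δ ≤ NN (e' + w) := by
        intro w hw
        have heq : e' + w = u - (w₀ - w) := by rw [he']; abel
        rw [heq]
        exact hδle _ (W.sub_mem hw₀ hw)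
      refine ⟨Fin.snoc e e', ?_, ?_⟩
      · rw [linearIndependent_fin_snoc]
        exact ⟨he, he'W⟩
      · intro c i
        set z : Fin d → L := ∑ j : Fin m, c j.castSucc • e j with hz
        have hzW : z ∈ W := Submodule.sum_mem _ fun j _ =>
          Submodule.smul_mem _ _ (Submodule.subset_span ⟨j, rfl⟩)
        have hy : ∑ j, c j • Fin.snoc e e' j = z + c (Fin.last m) • e' := by
          rw [Fin.sum_univ_castSucc]
          simp only [Fin.snoc_castSucc, Fin.snoc_last, hz]
        rw [hy]
        set y : Fin d → L := z + c (Fin.last m) • e' with hyd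
        have hyn : 0 ≤ NN y := NN_nonneg v hd h1 y
        have ht0 : (0:ℝ) < t := lt_trans one_pos ht
        have hA : v (c (Fin.last m)) * NN e' ≤ t * NN y := by
          rcases eq_or_ne (c (Fin.last m)) 0 with h0 | h0
          · rw [h0, map_zero, zero_mul]
            positivity
          · have hrw : NN y = v (c (Fin.last m)) * NN (e' + (c (Fin.last m))⁻¹ • z) := by
              rw [← hsmul, smul_add, smul_smul, mul_inv_cancel₀ h0, one_smul, add_comm]
            have h5 : δ ≤ NN (e' + (c (Fin.last m))⁻¹ • z) := hlow _ (W.smul_mem _ hzW)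
            calc v (c (Fin.last m)) * NN e' ≤ v (c (Fin.last m)) * (t * δ) :=
                  mul_le_mul_of_nonneg_left he'δ.le (v.nonneg _)
              _ = t * (v (c (Fin.last m)) * δ) := by ring
              _ ≤ t * NN y := by
                  rw [hrw]
                  exact mul_le_mul_of_nonneg_left
                    (mul_le_mul_of_nonneg_left h5 (v.nonneg _)) ht0.le
        have hB : NN z ≤ t * NN y := by
          have hzy : z = y + (-(c (Fin.last m))) • e' := by
            rw [hyd, neg_smul]
            abel
          rw [hzy]
          refine (hadd _ _).trans (max_le ?_ ?_)
          · exact le_mul_of_one_le_left hyn ht.le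
          · rw [hsmul, v.map_neg]
            exact hA
        refine Fin.lastCases ?_ ?_ i
        · rw [Fin.snoc_last]
          refine hA.trans (mul_le_mul_of_nonneg_right ?_ hyn)
          calc t = t ^ 1 := (pow_one t).symm
            _ ≤ t ^ (m + 1) := pow_le_pow_right₀ ht.le (by omega)
        · intro j
          rw [Fin.snoc_castSucc]
          have h6 := hprop (fun j => c j.castSucc) j
          calc v (c j.castSucc) * NN (e j) ≤ t ^ m * NN z := h6
            _ ≤ t ^ m * (t * NN y) :=
                mul_le_mul_of_nonneg_left hB (pow_nonneg ht0.le m)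
            _ = t ^ (m + 1) * NN y := by ring

end Diag
-- ### Part 4c: the conjugating matrix
section Diag2
variable [IsAlgClosed L]
variable {NN : (Fin d → L) → ℝ}
variable (h1 : ∀ u, vVec v d u ≤ NN u)
variable (hadd : ∀ u w, NN (u + w) ≤ max (NN u) (NN w))
variable (hsmul : ∀ (c : L) (u), NN (c • u) = v c * NN u)
variable {π : L} (hπ0 : 0 < v π) (hπ1 : v π < 1)

include hd hna h1 hadd hsmul hπ0 hπ1 in
lemma exists_conj_bound {t : ℝ} (ht : 1 < t) :
    ∃ x : (Matrix (Fin d) (Fin d) L)ˣ,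
      (∀ u, vVec v d (x.val.mulVec u) ≤ t ^ (d + 1) * NN u) ∧
      (∀ u, NN u ≤ vVec v d (x.val.mulVec u)) := by
  haveI : Nonempty (Fin d) := finNonempty hd
  have ht0 : (0:ℝ) < t := lt_trans one_pos ht
  obtain ⟨e, he, hprop⟩ := exists_good_family v hna hd h1 hadd hsmul ht d le_rfl
  have hcard : Fintype.card (Fin d) = Module.finrank L (Fin d → L) := by
    rw [Module.finrank_pi, Fintype.card_fin]
  set B := basisOfLinearIndependentOfCardEqFinrank he hcard with hBdef
  have hBe : ∀ i, B i = e i := fun i => by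
    rw [hBdef, coe_basisOfLinearIndependentOfCardEqFinrank]
  have hBpos : ∀ i, 0 < NN (B i) := fun i => NN_pos v hd h1 (B.ne_zero i)
  have hsel : ∀ i : Fin d, ∃ a : L, a ≠ 0 ∧ NN (B i) < v a ∧ v a < t * NN (B i) :=
    fun i => exists_v_btwn v hπ0 hπ1 (hBpos i) ((lt_mul_iff_one_lt_left (hBpos i)).mpr ht)
  choose α hα0 hα1 hα2 using hsel
  set B' := B.unitsSMul (fun i => (Units.mk0 (α i) (hα0 i))⁻¹) with hB'
  have hB'i : ∀ i, B' i = (α i)⁻¹ • B i := fun i => by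
    rw [hB', Module.Basis.unitsSMul_apply]
    norm_cast
  have hNB' : ∀ i, NN (B' i) = (v (α i))⁻¹ * NN (B i) := fun i => by
    rw [hB'i, hsmul, map_inv₀]
  have hvα : ∀ i, 0 < v (α i) := fun i => v.pos (hα0 i)
  have hN1 : ∀ i, NN (B' i) ≤ 1 := by
    intro i
    rw [hNB', inv_mul_le_iff₀ (hvα i), mul_one]
    exact (hα1 i).le
  have hNt : ∀ i, t⁻¹ ≤ NN (B' i) := by
    intro i
    rw [hNB']
    rw [le_inv_mul_iff₀ (hvα i)]
    calc v (α i) * t⁻¹ ≤ t * NN (B i) * t⁻¹ :=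
          mul_le_mul_of_nonneg_right (hα2 i).le (by positivity)
      _ = NN (B i) := by
          field_simp
  have hprop' : ∀ c : Fin d → L, ∀ i,
      v (c i) * NN (B' i) ≤ t ^ d * NN (∑ j, c j • B' j) := by
    intro c i
    have h6 := hprop (fun j => c j * (α j)⁻¹) i
    have hL : v (c i * (α i)⁻¹) * NN (e i) = v (c i) * NN (B' i) := by
      rw [map_mul, map_inv₀, hNB', hBe, mul_assoc]
    have hR : ∑ j, (c j * (α j)⁻¹) • e j = ∑ j, c j • B' j := by
      refine Finset.sum_congr rfl fun j _ => ?_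
      rw [hB'i, ← hBe, ← smul_smul]
    rw [hL, hR] at h6
    exact h6
  -- the coordinate matrix
  set X := LinearMap.toMatrix' (B'.equivFun.toLinearMap) with hX
  set X' := LinearMap.toMatrix' (B'.equivFun.symm.toLinearMap) with hX'
  have hcomp1 : B'.equivFun.toLinearMap.comp B'.equivFun.symm.toLinearMap
      = LinearMap.id := by
    ext u
    simp
  have hcomp2 : B'.equivFun.symm.toLinearMap.comp B'.equivFun.toLinearMap
      = LinearMap.id := by
    ext u
    simp
  have hXX' : X * X' = 1 := by
    rw [hX, hX', ← LinearMap.toMatrix'_comp, hcomp1, LinearMap.toMatrix'_id]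
  have hX'X : X' * X = 1 := by
    rw [hX, hX', ← LinearMap.toMatrix'_comp, hcomp2, LinearMap.toMatrix'_id]
  have hXmul : ∀ u, X.mulVec u = B'.equivFun u := by
    intro u
    have h7 : Matrix.toLin' X = B'.equivFun.toLinearMap := by
      rw [hX, Matrix.toLin'_toMatrix']
    have h8 := congrFun (congrArg (fun (f : ((Fin d → L) →ₗ[L] (Fin d → L))) => (f : (Fin d → L) → (Fin d → L))) h7) u
    rw [← Matrix.toLin'_apply]
    exact h8
  have hne : (Finset.univ : Finset (Fin d)).Nonempty :=
    Finset.univ_nonempty_iff.mpr (finNonempty hd)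
  refine ⟨⟨X, X', hXX', hX'X⟩, fun u => ?_, fun u => ?_⟩
  · -- upper bound
    show vVec v d (X.mulVec u) ≤ _
    rw [hXmul]
    refine vVec_le v hd _ fun i => ?_
    have h7 := hprop' (fun j => B'.equivFun u j) i
    have hsum : ∑ j, B'.equivFun u j • B' j = u := B'.sum_equivFun u
    rw [hsum] at h7
    have h8 : v (B'.equivFun u i) ≤ t * (v (B'.equivFun u i) * NN (B' i)) := by
      calc v (B'.equivFun u i) = v (B'.equivFun u i) * (t * t⁻¹) := by
            rw [mul_inv_cancel₀ ht0.ne', mul_one]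
        _ = t * (v (B'.equivFun u i) * t⁻¹) := by ring
        _ ≤ t * (v (B'.equivFun u i) * NN (B' i)) :=
            mul_le_mul_of_nonneg_left
              (mul_le_mul_of_nonneg_left (hNt i) (v.nonneg _)) ht0.le
    calc v (B'.equivFun u i) ≤ t * (v (B'.equivFun u i) * NN (B' i)) := h8
      _ ≤ t * (t ^ d * NN u) := mul_le_mul_of_nonneg_left h7 ht0.le
      _ = t ^ (d + 1) * NN u := by ring
  · -- lower bound
    show NN u ≤ vVec v d (X.mulVec u)
    rw [hXmul]
    have hsum : u = ∑ j, B'.equivFun u j • B' j := (B'.sum_equivFun u).symm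
    conv_lhs => rw [hsum]
    refine (ultra_sum_le NN (NN_zero v hsmul) hadd Finset.univ hne _).trans ?_
    refine Finset.sup'_le _ _ fun j _ => ?_
    rw [hsmul]
    calc v (B'.equivFun u j) * NN (B' j) ≤ v (B'.equivFun u j) * 1 :=
          mul_le_mul_of_nonneg_left (hN1 j) (v.nonneg _)
      _ = v (B'.equivFun u j) := mul_one _
      _ ≤ vVec v d (B'.equivFun u) := coord_le_vVec v hd _ j

end Diag2
-- ### Part 4d: the orbit norm and the hard direction
section Hard

lemma em_le_of_mulVec (A : Matrix (Fin d) (Fin d) L) {c : ℝ}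
    (hc : ∀ u, vVec v d (A.mulVec u) ≤ c * vVec v d u) : em v hd A ≤ c := by
  refine em_le v hd A fun i j => ?_
  have h1 := hc (Pi.single j 1)
  have hA : A.mulVec (Pi.single j 1) = fun i => A i j := by
    ext i
    simp [Matrix.mulVec_single]
  have hv1 : vVec v d (Pi.single j 1) = 1 := by
    refine le_antisymm (vVec_le v hd _ fun i => ?_) ?_
    · rcases eq_or_ne i j with rfl | hij
      · simp
      · simp [Pi.single_apply, hij]
    · have := coord_le_vVec v hd (Pi.single j (1:L)) j
      simpa using this
  rw [hA, hv1, mul_one] at h1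
  exact (coord_le_vVec v hd (fun i => A i j) i).trans h1

variable [IsAlgClosed L]
variable {P : Set (Matrix (Fin d) (Fin d) L)}
variable (hP1 : (1 : Matrix (Fin d) (Fin d) L) ∈ P) {C : ℝ}
  (hC : ∀ g ∈ P, em v hd g ≤ C)
variable {π : L} (hπ0 : 0 < v π) (hπ1 : v π < 1)

include hna hP1 hC hπ0 hπ1 in
lemma vE_lt_rho_mul {t : ℝ} (ht : 1 < t) :
    vE v d P < rho v hna hd hP1 hC * t ^ (d + 2) := by
  haveI : Nonempty (Fin d) := finNonempty hd
  set ρ := rho v hna hd hP1 hC with hρ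
  have hρ1 : 1 ≤ ρ := one_le_rho v hna hd hP1 hC
  have hρ0 : 0 < ρ := lt_of_lt_of_le one_pos hρ1
  have ht0 : (0:ℝ) < t := lt_trans one_pos ht
  -- pick the scaling factor `lam`
  obtain ⟨lam, hlam0, hlam1, hlam2⟩ := exists_v_btwn v hπ0 hπ1 (r := (ρ * t)⁻¹) (s := ρ⁻¹)
    (by positivity)
    (by
      have h2 : ρ < ρ * t := (lt_mul_iff_one_lt_right hρ0).mpr ht
      have h3 : (0:ℝ) < ρ * t := by positivity
      exact (inv_lt_inv₀ h3 hρ0).mpr h2)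
  set w := v lam with hw
  have hw0 : 0 < w := v.pos hlam0
  have hwρ : w * ρ < 1 := by
    have h4 := mul_lt_mul_of_pos_right hlam2 hρ0
    rwa [inv_mul_cancel₀ hρ0.ne'] at h4
  have hwinv1 : ρ < w⁻¹ := by
    have h4 := mul_lt_mul_of_pos_left hwρ (inv_pos.mpr hw0)
    rwa [← mul_assoc, inv_mul_cancel₀ hw0.ne', one_mul, mul_one] at h4
  have hwinv2 : w⁻¹ < ρ * t := by
    have h4 := mul_lt_mul_of_pos_left hlam1 (mul_pos hρ0 ht0)
    rw [mul_inv_cancel₀ (by positivity : (ρ*t) ≠ 0)] at h4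
    have h5 := mul_lt_mul_of_pos_right h4 (inv_pos.mpr hw0)
    rwa [one_mul, mul_assoc, mul_inv_cancel₀ hw0.ne', mul_one] at h5
  -- a uniform bound on `w^n * aseq n`
  have hev : ∀ᶠ n : ℕ in atTop,
      aseq v hd P n ^ ((n:ℝ)⁻¹) < w⁻¹ ∧ 1 ≤ n := by
    refine Filter.Eventually.and ?_ (eventually_ge_atTop 1)
    exact (tendsto_aseq_rpow v hna hd hP1 hC).eventually (eventually_lt_nhds hwinv1)
  obtain ⟨N, hN⟩ := eventually_atTop.mp hev
  have hbound' : ∀ n, N ≤ n → w ^ n * aseq v hd P n ≤ 1 := by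
    intro n hn
    obtain ⟨h5, h6⟩ := hN n hn
    have hpos := aseq_pos v hna hd hP1 hC n
    have h7 : aseq v hd P n < (w⁻¹) ^ n := by
      have h8 : (aseq v hd P n ^ ((n:ℝ)⁻¹)) ^ n = aseq v hd P n :=
        Real.rpow_inv_natCast_pow hpos.le (by omega)
      rw [← h8]
      exact pow_lt_pow_left₀ h5 (Real.rpow_nonneg hpos.le _) (by omega)
    calc w ^ n * aseq v hd P n ≤ w ^ n * (w⁻¹) ^ n :=
          mul_le_mul_of_nonneg_left h7.le (by positivity)
      _ = 1 := by rw [← mul_pow, mul_inv_cancel₀ hw0.ne', one_pow]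
  set S : ℝ := max 1 ((Finset.range (N+1)).sup'
    ⟨N, Finset.self_mem_range_succ N⟩ (fun n => w ^ n * aseq v hd P n)) with hS
  have hS1 : 1 ≤ S := le_max_left _ _
  have hS0 : 0 < S := lt_of_lt_of_le one_pos hS1
  have hSb : ∀ n, w ^ n * aseq v hd P n ≤ S := by
    intro n
    rcases le_or_gt n N with h | h
    · exact le_trans (Finset.le_sup' (fun n => w ^ n * aseq v hd P n)
        (Finset.mem_range_succ_iff.mpr h)) (le_max_right _ _)
    · exact le_trans (hbound' n h.le) hS1
  -- the orbit norm
  set Os : (Fin d → L) → Set ℝ := fun u =>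
    {r | ∃ n : ℕ, ∃ g ∈ P ^ n, r = w ^ n * vVec v d (g.mulVec u)} with hOs
  set NN : (Fin d → L) → ℝ := fun u => sSup (Os u) with hNN
  have hmem0 : ∀ u, vVec v d u ∈ Os u := by
    intro u
    exact ⟨0, 1, one_mem_pow hP1 0, by rw [Matrix.one_mulVec, pow_zero, one_mul]⟩
  have hub : ∀ u, ∀ r ∈ Os u, r ≤ S * vVec v d u := by
    rintro u r ⟨n, g, hg, rfl⟩
    calc w ^ n * vVec v d (g.mulVec u) ≤ w ^ n * (em v hd g * vVec v d u) :=
          mul_le_mul_of_nonneg_left (mulVec_le v hna hd g u) (by positivity)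
      _ = (w ^ n * em v hd g) * vVec v d u := by ring
      _ ≤ S * vVec v d u := by
          refine mul_le_mul_of_nonneg_right ?_ (vVec_nonneg v hd u)
          calc w ^ n * em v hd g ≤ w ^ n * aseq v hd P n :=
                mul_le_mul_of_nonneg_left (em_le_aseq v hna hd hC hg) (by positivity)
            _ ≤ S := hSb n
  have hbdd : ∀ u, BddAbove (Os u) := fun u => ⟨S * vVec v d u, fun r hr => hub u r hr⟩
  have h1 : ∀ u, vVec v d u ≤ NN u := fun u => le_csSup (hbdd u) (hmem0 u)
  have hNle : ∀ u, NN u ≤ S * vVec v d u := by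
    intro u
    refine Real.sSup_le (fun r hr => hub u r hr) ?_
    have := vVec_nonneg v hd u
    positivity
  have hNnn : ∀ u, 0 ≤ NN u := fun u => (vVec_nonneg v hd u).trans (h1 u)
  have hadd : ∀ u u', NN (u + u') ≤ max (NN u) (NN u') := by
    intro u u'
    refine Real.sSup_le ?_ (le_max_of_le_left (hNnn u))
    rintro r ⟨n, g, hg, rfl⟩
    rw [Matrix.mulVec_add]
    calc w ^ n * vVec v d (g.mulVec u + g.mulVec u')
        ≤ w ^ n * max (vVec v d (g.mulVec u)) (vVec v d (g.mulVec u')) :=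
          mul_le_mul_of_nonneg_left (vVec_add_le v hna hd _ _) (by positivity)
      _ = max (w ^ n * vVec v d (g.mulVec u)) (w ^ n * vVec v d (g.mulVec u')) :=
          mul_max_of_nonneg _ _ (by positivity)
      _ ≤ max (NN u) (NN u') :=
          max_le_max (le_csSup (hbdd u) ⟨n, g, hg, rfl⟩) (le_csSup (hbdd u') ⟨n, g, hg, rfl⟩)
  have hsmul_le : ∀ (c : L) (u), NN (c • u) ≤ v c * NN u := by
    intro c u
    refine Real.sSup_le ?_ (mul_nonneg (v.nonneg c) (hNnn u))
    rintro r ⟨n, g, hg, rfl⟩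
    rw [Matrix.mulVec_smul, vVec_smul v hd]
    calc w ^ n * (v c * vVec v d (g.mulVec u)) = v c * (w ^ n * vVec v d (g.mulVec u)) := by ring
      _ ≤ v c * NN u :=
          mul_le_mul_of_nonneg_left (le_csSup (hbdd u) ⟨n, g, hg, rfl⟩) (v.nonneg c)
  have hNzero : NN 0 = 0 := by
    refine le_antisymm ?_ ?_
    · have := hNle 0
      rwa [vVec_zero v hd, mul_zero] at this
    · have := h1 0
      rwa [vVec_zero v hd] at this
  have hsmul : ∀ (c : L) (u), NN (c • u) = v c * NN u := by
    intro c u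
    rcases eq_or_ne c 0 with rfl | hc
    · rw [zero_smul, map_zero, zero_mul, hNzero]
    · refine le_antisymm (hsmul_le c u) ?_
      have h4 := hsmul_le c⁻¹ (c • u)
      rw [inv_smul_smul₀ hc, map_inv₀] at h4
      have h5 := mul_le_mul_of_nonneg_left h4 (v.nonneg c)
      rwa [← mul_assoc, mul_inv_cancel₀ (v.pos hc).ne', one_mul] at h5
  have hq : ∀ q ∈ P, ∀ u, NN (q.mulVec u) ≤ w⁻¹ * NN u := by
    intro q hq u
    refine Real.sSup_le ?_ (mul_nonneg (by positivity) (hNnn u))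
    rintro r ⟨n, g, hg, rfl⟩
    have hmem : g * q ∈ P ^ (n + 1) := by
      rw [pow_succ]
      exact Set.mul_mem_mul hg hq
    have e2 : g.mulVec (q.mulVec u) = (g * q).mulVec u := Matrix.mulVec_mulVec u g q
    rw [e2]
    have e3 : w ^ n = w⁻¹ * w ^ (n + 1) := by
      rw [pow_succ, ← mul_assoc, mul_comm w⁻¹ (w ^ n), mul_assoc, inv_mul_cancel₀ hw0.ne',
        mul_one]
    rw [e3, mul_assoc]
    exact mul_le_mul_of_nonneg_left (le_csSup (hbdd u) ⟨n + 1, g * q, hmem, rfl⟩)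
      (by positivity)
  -- apply the diagonalization lemma
  obtain ⟨x, hx1, hx2⟩ := exists_conj_bound v hna hd h1 hadd hsmul hπ0 hπ1 ht
  have hconj : ∀ g ∈ P, em v hd (x.val * g * x.inv) ≤ t ^ (d + 1) * w⁻¹ := by
    intro g hg
    refine em_le_of_mulVec v hd _ fun u => ?_
    have e1 : (x.val * g * x.inv).mulVec u = x.val.mulVec (g.mulVec (x.inv.mulVec u)) := by
      rw [Matrix.mulVec_mulVec, Matrix.mulVec_mulVec]
    have e4 : x.val.mulVec (x.inv.mulVec u) = u := by
      rw [Matrix.mulVec_mulVec, x.val_inv, Matrix.one_mulVec]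
    rw [e1]
    calc vVec v d (x.val.mulVec (g.mulVec (x.inv.mulVec u)))
        ≤ t ^ (d+1) * NN (g.mulVec (x.inv.mulVec u)) := hx1 _
      _ ≤ t ^ (d+1) * (w⁻¹ * NN (x.inv.mulVec u)) :=
          mul_le_mul_of_nonneg_left (hq g hg _) (by positivity)
      _ ≤ t ^ (d+1) * (w⁻¹ * vVec v d (x.val.mulVec (x.inv.mulVec u))) := by
          refine mul_le_mul_of_nonneg_left (mul_le_mul_of_nonneg_left ?_ (by positivity))
            (by positivity)
          exact hx2 _
      _ = t ^ (d+1) * w⁻¹ * vVec v d u := by rw [e4]; ring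
  have hbconj : bconj v hd x P ≤ t ^ (d + 1) * w⁻¹ := by
    refine Real.sSup_le ?_ (by positivity)
    rintro r ⟨g', ⟨g, hg, rfl⟩, rfl⟩
    exact hconj g hg
  have hvE : vE v d P ≤ bconj v hd x P := by
    refine csInf_le ⟨ρ, ?_⟩ ⟨x, (vNorm_eq_sSup_em v hna hd _).symm⟩
    rintro r ⟨y, rfl⟩
    rw [vNorm_eq_sSup_em v hna hd]
    exact rho_le_bconj v hna hd hP1 hC y
  calc vE v d P ≤ t ^ (d+1) * w⁻¹ := hvE.trans hbconj
    _ < t ^ (d+1) * (ρ * t) := mul_lt_mul_of_pos_left hwinv2 (by positivity)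
    _ = ρ * t ^ (d + 2) := by ring

end Hard
-- ### Part 5: conclusion
section Conclusion
variable [IsAlgClosed L]
variable {P : Set (Matrix (Fin d) (Fin d) L)}
variable (hP1 : (1 : Matrix (Fin d) (Fin d) L) ∈ P) {C : ℝ}
  (hC : ∀ g ∈ P, em v hd g ≤ C)
variable {π : L} (hπ0 : 0 < v π) (hπ1 : v π < 1)

include hna hP1 hC hπ0 hπ1 in
lemma vE_eq_rho : vE v d P = rho v hna hd hP1 hC := by
  refine le_antisymm ?_ (rho_le_vE v hna hd hP1 hC)
  by_contra hcon
  push_neg at hcon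
  have hρ1 : 1 ≤ rho v hna hd hP1 hC := one_le_rho v hna hd hP1 hC
  have hρ0 : 0 < rho v hna hd hP1 hC := lt_of_lt_of_le one_pos hρ1
  have hgt1 : 1 < vE v d P / rho v hna hd hP1 hC := (one_lt_div hρ0).mpr hcon
  set t : ℝ := (vE v d P / rho v hna hd hP1 hC) ^ (((d : ℝ) + 2)⁻¹) with htdef
  have hbase : 0 < vE v d P / rho v hna hd hP1 hC := lt_trans one_pos hgt1
  have ht : 1 < t := by
    rw [htdef, Real.one_lt_rpow_iff_of_pos hbase]
    left
    constructor
    · exact hgt1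
    · positivity
  have hkey := vE_lt_rho_mul v hna hd hP1 hC hπ0 hπ1 ht
  have htd : t ^ (d + 2) = vE v d P / rho v hna hd hP1 hC := by
    rw [htdef, ← Real.rpow_natCast ((vE v d P / rho v hna hd hP1 hC) ^ (((d : ℝ) + 2)⁻¹)) (d+2),
      ← Real.rpow_mul hbase.le]
    have : (((d : ℝ) + 2)⁻¹) * ((d + 2 : ℕ) : ℝ) = 1 := by
      have h2 : ((d + 2 : ℕ) : ℝ) = (d : ℝ) + 2 := by push_cast; ring
      rw [h2, inv_mul_cancel₀ (by positivity)]
    rw [this, Real.rpow_one]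
  rw [htd, mul_div_cancel₀ _ hρ0.ne'] at hkey
  exact lt_irrefl _ hkey

end Conclusion
end ST10

theorem nonarch_spectral_radius_eq_min_norm (d : ℕ) (hd : 1 ≤ d) (p : ℕ) [Fact p.Prime]
    (k : Type) [Field k] [Algebra ℚ_[p] k] [FiniteDimensional ℚ_[p] k]
    (v : AbsoluteValue (AlgebraicClosure k) ℝ)
    (hv : ∀ x : ℚ_[p], v (algebraMap k (AlgebraicClosure k) (algebraMap ℚ_[p] k x)) = ‖x‖)
    (Q : Set (Matrix (Fin d) (Fin d) k))
    (hQ : ∃ C : ℝ, ∀ A ∈ Q, vOp v d (A.map ⇑(algebraMap k (AlgebraicClosure k))) ≤ C)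
    (h1 : (1 : Matrix (Fin d) (Fin d) k) ∈ Q) :
    vR v d ((fun A => A.map ⇑(algebraMap k (AlgebraicClosure k))) '' Q) =
      vE v d ((fun A => A.map ⇑(algebraMap k (AlgebraicClosure k))) '' Q) := by
  classical
  set L := AlgebraicClosure k with hL
  set P : Set (Matrix (Fin d) (Fin d) L) :=
    (fun A => A.map ⇑(algebraMap k L)) '' Q with hPdef
  -- the absolute value is nonarchimedean
  have hnat : ∀ n : ℕ, v ((n : L)) ≤ 1 := by
    intro n
    have e1 : ((n : L)) = algebraMap k L (algebraMap ℚ_[p] k ((n : ℚ_[p]))) := by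
      rw [map_natCast, map_natCast]
    rw [e1, hv]
    have := Padic.norm_int_le_one (p := p) (n : ℤ)
    simpa using this
  have hna : ∀ x y : L, v (x + y) ≤ max (v x) (v y) := absval_nonarch v hnat
  -- the element of small positive absolute value
  have hπ : v ((p : L)) = (p : ℝ)⁻¹ := by
    have e1 : ((p : L)) = algebraMap k L (algebraMap ℚ_[p] k ((p : ℚ_[p]))) := by
      rw [map_natCast, map_natCast]
    rw [e1, hv]
    exact Padic.norm_p
  have hp1 : 1 < (p : ℝ) := by exact_mod_cast (Fact.out : p.Prime).one_lt
  have hπ0 : 0 < v ((p : L)) := by rw [hπ]; positivity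
  have hπ1 : v ((p : L)) < 1 := by
    rw [hπ]
    exact inv_lt_one_of_one_lt₀ hp1
  -- facts about P
  have hP1 : (1 : Matrix (Fin d) (Fin d) L) ∈ P :=
    ⟨1, h1, Matrix.map_one _ (map_zero _) (map_one _)⟩
  obtain ⟨C, hC0⟩ := hQ
  have hC : ∀ g ∈ P, ST10.em v hd g ≤ C := by
    rintro g ⟨A, hA, rfl⟩
    rw [← ST10.vOp_eq_em v hna hd]
    exact hC0 A hA
  -- identification of the sequence and the limit
  have hseq : ∀ n : ℕ, vNorm v d (P ^ n) = ST10.aseq v hd P n := fun n =>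
    ST10.vNorm_eq_sSup_em v hna hd _
  have htend : Tendsto (fun n : ℕ => vNorm v d (P ^ n) ^ ((n : ℝ)⁻¹)) atTop
      (𝓝 (ST10.rho v hna hd hP1 hC)) := by
    refine (ST10.tendsto_aseq_rpow v hna hd hP1 hC).congr fun n => ?_
    rw [hseq n]
  have hVE : vE v d P = ST10.rho v hna hd hP1 hC :=
    ST10.vE_eq_rho v hna hd hP1 hC hπ0 hπ1
  rw [show vR v d P = limUnder atTop (fun n : ℕ => vNorm v d (P ^ n) ^ ((n : ℝ)⁻¹)) from rfl,
    hVE]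
  exact htend.limUnder_eq
end
end

section
/- Let Γ be a group and F a finite subset of Γ containing the identity such that F together with the inverses of its elements generates Γ. Let Γ₀ be a subgroup of index k in Γ. Then F^{2k+1} (the set of products of 2k+1 elements of F) contains a generating set of Γ₀. -/
/-!
STATEMENT 17.  Let `Γ` be a group and `F` a finite subset containing the identity such
that `F` together with the inverses of its elements generates `Γ`.  If `Γ₀` is a
subgroup of index `k` in `Γ`, then `F^{2k+1}` contains a generating set of `Γ₀`.
-/

open scoped Pointwise

/-- Every left coset of a subgroup of index `k` meets `F ^ k`, when `1 ∈ F` and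
`F ∪ F⁻¹` generates the group. -/
lemma left_coset_coverage (Γ : Type) [Group Γ] (F : Set Γ)
    (h1 : (1 : Γ) ∈ F) (hgen : Subgroup.closure (F ∪ F⁻¹) = ⊤)
    (Γ₀ : Subgroup Γ) (k : ℕ) (hk : 0 < k) (hidx : Γ₀.index = k) :
    ∀ g : Γ, ∃ a ∈ F ^ k, a⁻¹ * g ∈ Γ₀ := by
  have hfin : Finite (Γ ⧸ Γ₀) := by
    have : Nat.card (Γ ⧸ Γ₀) ≠ 0 := by
      rw [← Subgroup.index_eq_card, hidx]; omega
    exact (Nat.card_ne_zero.mp this).2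
  set D : ℕ → Set (Γ ⧸ Γ₀) := fun n => (QuotientGroup.mk : Γ → Γ ⧸ Γ₀) '' (F ^ n) with hD
  have hDfin : ∀ n, (D n).Finite := fun n => Set.toFinite _
  have hone : ∀ n, ((1 : Γ) : Γ ⧸ Γ₀) ∈ D n := fun n =>
    Set.mem_image_of_mem _ (Set.one_mem_pow h1)
  have hmono : ∀ {m n : ℕ}, m ≤ n → D m ⊆ D n := fun {m n} hmn =>
    Set.image_mono (Set.pow_subset_pow_right h1 hmn)
  have hsucc : ∀ n, D (n + 1) = ⋃ f ∈ F, f • D n := by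
    intro n
    ext q
    simp only [hD, Set.mem_iUnion, Set.mem_image, pow_succ']
    constructor
    · rintro ⟨x, hx, rfl⟩
      obtain ⟨f, hf, g, hg, rfl⟩ := Set.mem_mul.mp hx
      exact ⟨f, hf, by
        refine ⟨_, ⟨g, hg, rfl⟩, ?_⟩
        exact (MulAction.Quotient.smul_mk Γ₀ f g).symm⟩
    · rintro ⟨f, hf, hq⟩
      obtain ⟨-, ⟨g, hg, rfl⟩, rfl⟩ := hq
      exact ⟨f * g, Set.mul_mem_mul hf hg, (MulAction.Quotient.smul_mk Γ₀ f g)⟩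
  have hstab : ∃ m ≤ k, D m = D (m + 1) := by
    by_contra hcon
    push_neg at hcon
    have key : ∀ n ≤ k, n + 1 ≤ (D n).ncard := by
      intro n hn
      induction n with
      | zero => exact (Set.ncard_pos (hDfin 0)).mpr ⟨_, hone 0⟩
      | succ n ih =>
        have h1n := ih (Nat.le_of_succ_le hn)
        have hne : D n ≠ D (n + 1) := hcon n (Nat.le_of_succ_le hn)
        have : D n ⊂ D (n + 1) := ssubset_of_ne_of_subset hne (hmono (Nat.le_succ n))
        have := Set.ncard_lt_ncard this (hDfin (n + 1))
        omega
    have h2 : (D k).ncard ≤ k := by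
      have := Set.ncard_le_ncard (Set.subset_univ (D k)) Set.finite_univ
      rwa [Set.ncard_univ, ← Subgroup.index, hidx] at this
    have := key k le_rfl
    omega
  obtain ⟨m, hmk, hstable⟩ := hstab
  have hfstab : ∀ f ∈ F, f • D m = D m := by
    intro f hf
    have hsub : f • D m ⊆ D m := by
      calc f • D m ⊆ ⋃ f ∈ F, f • D m :=
            Set.subset_biUnion_of_mem (u := fun f => f • D m) hf
        _ = D (m + 1) := (hsucc m).symm
        _ = D m := hstable.symm
    refine Set.eq_of_subset_of_ncard_le hsub ?_ (hDfin m)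
    rw [Set.ncard_smul_set]
  have hallstab : ∀ g : Γ, g • D m = D m := by
    intro g
    have hg : g ∈ Subgroup.closure (F ∪ F⁻¹) := by rw [hgen]; exact Subgroup.mem_top g
    have : Subgroup.closure (F ∪ F⁻¹) ≤ MulAction.stabilizer Γ (D m) := by
      rw [Subgroup.closure_le]
      rintro x (hx | hx)
      · exact MulAction.mem_stabilizer_iff.mpr (hfstab x hx)
      · rw [SetLike.mem_coe, ← Subgroup.inv_mem_iff]
        exact MulAction.mem_stabilizer_iff.mpr (hfstab x⁻¹ hx)
    exact MulAction.mem_stabilizer_iff.mp (this hg)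
  have huniv : ∀ q : Γ ⧸ Γ₀, q ∈ D m := by
    intro q
    obtain ⟨g, rfl⟩ := QuotientGroup.mk_surjective q
    have : (g : Γ ⧸ Γ₀) = g • ((1 : Γ) : Γ ⧸ Γ₀) := by
      simp [MulAction.Quotient.smul_mk]
    rw [this, ← hallstab g]
    exact Set.smul_mem_smul_set (hone m)
  intro g
  obtain ⟨a, ha, hq⟩ := huniv ((g : Γ ⧸ Γ₀))
  exact ⟨a, Set.pow_subset_pow_right h1 hmk ha, QuotientGroup.eq.mp hq⟩

theorem finite_index_subgroup_generators (Γ : Type) [Group Γ] (F : Set Γ)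
    (hF : F.Finite) (h1 : (1 : Γ) ∈ F) (hgen : Subgroup.closure (F ∪ F⁻¹) = ⊤)
    (Γ₀ : Subgroup Γ) (k : ℕ) (hk : 0 < k) (hidx : Γ₀.index = k) :
    ∃ S : Set Γ, S ⊆ F ^ (2 * k + 1) ∧ Subgroup.closure S = Γ₀ := by
  have hcovL := left_coset_coverage Γ F h1 hgen Γ₀ k hk hidx
  -- right-coset coverage, from the lemma applied to `F⁻¹`
  have hcovR : ∀ g : Γ, ∃ a ∈ F ^ k, g * a⁻¹ ∈ Γ₀ := by
    have h1' : (1 : Γ) ∈ F⁻¹ := by rw [Set.mem_inv, inv_one]; exact h1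
    have hgen' : Subgroup.closure (F⁻¹ ∪ F⁻¹⁻¹) = ⊤ := by
      rw [inv_inv, Set.union_comm]; exact hgen
    intro g
    obtain ⟨a, ha, h⟩ := left_coset_coverage Γ F⁻¹ h1' hgen' Γ₀ k hk hidx g⁻¹
    rw [inv_pow] at ha
    refine ⟨a⁻¹, Set.mem_inv.mp ha, ?_⟩
    have := Γ₀.inv_mem h
    rw [mul_inv_rev, inv_inv, inv_inv] at this
    rwa [inv_inv]
  set S : Set Γ := (↑Γ₀ : Set Γ) ∩ F ^ (2 * k + 1) with hS
  set N := Subgroup.closure S with hN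
  have hSN : S ⊆ ↑N := Subgroup.subset_closure
  have hNle : N ≤ Γ₀ := (Subgroup.closure_le _).mpr Set.inter_subset_left
  have hpoweq : F ^ k * F * F ^ k = F ^ (2 * k + 1) := by
    rw [← pow_succ, ← pow_add]; congr 1; omega
  -- key lemma: products b f c⁻¹ lying in Γ₀ belong to N
  have helper : ∀ b ∈ F ^ k, ∀ c ∈ F ^ k, ∀ f ∈ F, b * f * c⁻¹ ∈ Γ₀ → b * f * c⁻¹ ∈ N := by
    intro b hb c hc f hf hmem
    obtain ⟨v, hv, hv0⟩ := hcovL c⁻¹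
    have hcv : c * v ∈ Γ₀ := by
      have := Γ₀.inv_mem hv0
      rwa [mul_inv_rev, inv_inv, inv_inv] at this
    have hp1F : b * f * v ∈ F ^ (2 * k + 1) := by
      rw [← hpoweq]
      exact Set.mul_mem_mul (Set.mul_mem_mul hb hf) hv
    have hp1Γ : b * f * v ∈ Γ₀ := by
      have he : b * f * v = (b * f * c⁻¹) * (c * v) := by group
      rw [he]; exact Γ₀.mul_mem hmem hcv
    have hp2F : c * v ∈ F ^ (2 * k + 1) := by
      refine Set.pow_subset_pow_right h1 (show 2 * k ≤ 2 * k + 1 by omega) ?_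
      rw [two_mul, pow_add]
      exact Set.mul_mem_mul hc hv
    have he : b * f * c⁻¹ = (b * f * v) * (c * v)⁻¹ := by group
    rw [he]
    exact N.mul_mem (hSN ⟨hp1Γ, hp1F⟩) (N.inv_mem (hSN ⟨hcv, hp2F⟩))
  -- induction step
  have step : ∀ x : Γ, (∃ a ∈ F ^ k, x * a⁻¹ ∈ N) → ∀ y ∈ F ∪ F⁻¹,
      ∃ a' ∈ F ^ k, (x * y) * a'⁻¹ ∈ N := by
    rintro x ⟨a, ha, hx⟩ y hy
    obtain ⟨a', ha', h2⟩ := hcovR (a * y)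
    refine ⟨a', ha', ?_⟩
    have key : a * y * a'⁻¹ ∈ N := by
      rcases hy with hyF | hyFi
      · exact helper a ha a' ha' y hyF h2
      · have hyf : y⁻¹ ∈ F := Set.mem_inv.mp hyFi
        have hinv : a' * y⁻¹ * a⁻¹ ∈ Γ₀ := by
          have h3 := Γ₀.inv_mem h2
          have h4 : (a * y * a'⁻¹)⁻¹ = a' * y⁻¹ * a⁻¹ := by group
          rwa [h4] at h3
        have h5 := helper a' ha' a ha y⁻¹ hyf hinv
        have h6 : (a' * y⁻¹ * a⁻¹)⁻¹ = a * y * a'⁻¹ := by group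
        rw [← h6]
        exact N.inv_mem h5
    have he : (x * y) * a'⁻¹ = (x * a⁻¹) * (a * y * a'⁻¹) := by group
    rw [he]
    exact N.mul_mem hx key
  have hform : ∀ x : Γ, x ∈ Subgroup.closure (F ∪ F⁻¹) → ∃ a ∈ F ^ k, x * a⁻¹ ∈ N := by
    intro x hxc
    induction hxc using Subgroup.closure_induction_right with
      | one => exact ⟨1, Set.one_mem_pow h1, by simpa using N.one_mem⟩
      | mul_right x hx y hy ih => exact step x ih y hy
      | mul_inv_cancel x hx y hy ih =>
        refine step x ih y⁻¹ ?_
        rcases hy with h | h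
        · exact Or.inr (by simpa using h)
        · exact Or.inl (Set.mem_inv.mp h)
  have main : ∀ g ∈ Γ₀, g ∈ N := by
    intro g hg
    obtain ⟨a, ha, hNg⟩ := hform g (by rw [hgen]; exact Subgroup.mem_top g)
    have haΓ : a ∈ Γ₀ := by
      have h5 : a = (g * a⁻¹)⁻¹ * g := by group
      rw [h5]; exact Γ₀.mul_mem (Γ₀.inv_mem (hNle hNg)) hg
    have haS : a ∈ S := ⟨haΓ, Set.pow_subset_pow_right h1 (by omega) ha⟩
    have he : g = (g * a⁻¹) * a := by group
    rw [he]
    exact N.mul_mem hNg (hSN haS)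
  exact ⟨S, Set.inter_subset_right, le_antisymm hNle main⟩
end
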